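/- arXiv:2409.15001 — 12 statements merged into one kernel-verified Lean document; each statement's English description precedes it below -/
import Mathlib

section
/- If G is a finite simple locally linear graph, then the triangle graph G* of G contains no induced subgraph isomorphic to the diamond K₄ − e (the complete graph on four vertices with one edge deleted). -/
open SimpleGraph Polynomial Matrix

variable {V : Type*}

/-- A finite simple graph is *locally linear* if it has no isolated vertices and
every edge lies in exactly one triangle (3-clique). -/
def IsLocallyLinear (G : SimpleGraph V) : Prop :=
  (∀ v : V, ∃ w : V, G.Adj v w) ∧
    ∀ ⦃x y : V⦄, G.Adj x y → ∃! t : Finset V, G.IsNClique 3 t ∧ x ∈ t ∧ y ∈ t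

/-- The triangle graph `G*` of `G`: its vertices are the triangles (3-cliques) of `G`,
two distinct triangles being adjacent iff they share a common vertex. -/
def TriangleGraph (G : SimpleGraph V) : SimpleGraph {t : Finset V // G.IsNClique 3 t} where
  Adj a b := a ≠ b ∧ ∃ v : V, v ∈ a.1 ∧ v ∈ b.1
  symm := ⟨fun _ _ ⟨h, v, hv1, hv2⟩ => ⟨h.symm, v, hv2, hv1⟩⟩
  loopless := ⟨fun _ ⟨h, _⟩ => h rfl⟩

/-- The diamond `K₄ - e`: the complete graph on four vertices with the edge `01` deleted. -/
def diamondGraph : SimpleGraph (Fin 4) where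
  Adj a b := a ≠ b ∧ ¬(a = 0 ∧ b = 1) ∧ ¬(a = 1 ∧ b = 0)
  symm := ⟨fun _ _ ⟨h1, h2, h3⟩ =>
    ⟨h1.symm, fun ⟨ha, hb⟩ => h3 ⟨hb, ha⟩, fun ⟨ha, hb⟩ => h2 ⟨hb, ha⟩⟩⟩
  loopless := ⟨fun _ ⟨h, _⟩ => h rfl⟩

instance (G : SimpleGraph V) [DecidableEq V] [Fintype V] [DecidableRel G.Adj] :
    Fintype {t : Finset V // G.IsNClique 3 t} := Subtype.fintype _

instance (G : SimpleGraph V) [Fintype V] [DecidableEq V] :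
    DecidableRel (TriangleGraph G).Adj :=
  fun a b => inferInstanceAs (Decidable (a ≠ b ∧ ∃ v : V, v ∈ a.1 ∧ v ∈ b.1))

/-- The set of vertex subsets of `H` inducing a cycle of length `n`. -/
def inducedCycleSets {W : Type*} (H : SimpleGraph W) (n : ℕ) : Set (Set W) :=
  {s : Set W | s.ncard = n ∧ Nonempty (H.induce s ≃g cycleGraph n)}

/-- The triangle graph of a finite locally linear graph contains no induced
subgraph isomorphic to the diamond `K₄ - e`. -/
theorem triangleGraph_diamond_free [Fintype V] (G : SimpleGraph V)
    (hG : IsLocallyLinear G) :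
    IsEmpty (diamondGraph ↪g TriangleGraph G) := by

  classical
  constructor
  intro f
  obtain ⟨-, huniq⟩ := hG
  -- Two distinct triangles share at most one vertex.
  have key : ∀ {s t : Finset V} {x y : V}, G.IsNClique 3 s → G.IsNClique 3 t →
      x ≠ y → x ∈ s → y ∈ s → x ∈ t → y ∈ t → s = t := by
    intro s t x y hs ht hxy hxs hys hxt hyt
    have hadj : G.Adj x y := hs.1 hxs hys hxy
    obtain ⟨u, -, hu⟩ := huniq hadj
    rw [hu s ⟨hs, hxs, hys⟩, hu t ⟨ht, hxt, hyt⟩]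
  have hAdj : ∀ i j : Fin 4, i ≠ j → ¬(i = 0 ∧ j = 1) → ¬(i = 1 ∧ j = 0) →
      diamondGraph.Adj i j := fun _ _ h1 h2 h3 => ⟨h1, h2, h3⟩
  set t0 := f 0 with ht0
  set t1 := f 1 with ht1
  set t2 := f 2 with ht2
  set t3 := f 3 with ht3
  have h02 : (TriangleGraph G).Adj t0 t2 := f.map_rel_iff.mpr (hAdj 0 2 (by simp) (by simp) (by simp))
  have h12 : (TriangleGraph G).Adj t1 t2 := f.map_rel_iff.mpr (hAdj 1 2 (by simp) (by simp) (by simp))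
  have h03 : (TriangleGraph G).Adj t0 t3 := f.map_rel_iff.mpr (hAdj 0 3 (by simp) (by simp) (by simp))
  have h13 : (TriangleGraph G).Adj t1 t3 := f.map_rel_iff.mpr (hAdj 1 3 (by simp) (by simp) (by simp))
  have h23 : (TriangleGraph G).Adj t2 t3 := f.map_rel_iff.mpr (hAdj 2 3 (by simp) (by simp) (by simp))
  have hn01 : ¬ (TriangleGraph G).Adj t0 t1 := fun h =>
    (f.map_rel_iff.mp h).2.1 ⟨rfl, rfl⟩
  have hne01 : t0 ≠ t1 := fun h => by
    have := f.injective h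
    simp at this
  have hdisj : ∀ v : V, v ∈ t0.1 → v ∉ t1.1 := by
    intro v hv0 hv1
    exact hn01 ⟨hne01, v, hv0, hv1⟩
  obtain ⟨hne02, a, ha0, ha2⟩ := h02
  obtain ⟨hne12, b, hb1, hb2⟩ := h12
  obtain ⟨hne03, c, hc0, hc3⟩ := h03
  obtain ⟨hne13, d, hd1, hd3⟩ := h13
  have hab : a ≠ b := fun h => hdisj a ha0 (h ▸ hb1)
  have hcd : c ≠ d := fun h => hdisj c hc0 (h ▸ hd1)
  have had : a ≠ d := fun h => hdisj a ha0 (h ▸ hd1)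
  have hbc : b ≠ c := fun h => hdisj c hc0 (h.symm ▸ hb1)
  by_cases hac : a = c
  · by_cases hbd : b = d
    · -- t2 and t3 share two vertices a, b
      exact h23.1 (Subtype.ext (key t2.2 t3.2 hab ha2 hb2 (hac ▸ hc3) (hbd ▸ hd3)))
    · -- triangle {a, b, d} : a-b in t2, a-d in t3, b-d in t1
      have hclq : G.IsNClique 3 {a, b, d} := by
        rw [is3Clique_triple_iff]
        exact ⟨t2.2.1 ha2 hb2 hab, t3.2.1 (hac ▸ hc3) hd3 had, t1.2.1 hb1 hd1 hbd⟩
      have := key t1.2 hclq hbd hb1 hd1 (by simp) (by simp)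
      have ha1 : a ∈ t1.1 := by rw [this]; simp
      exact hdisj a ha0 ha1
  · by_cases hbd : b = d
    · -- triangle {b, a, c} : b-a in t2, b-c in t3, a-c in t0
      have hclq : G.IsNClique 3 {b, a, c} := by
        rw [is3Clique_triple_iff]
        exact ⟨t2.2.1 hb2 ha2 hab.symm, t3.2.1 (hbd ▸ hd3) hc3 hbc, t0.2.1 ha0 hc0 hac⟩
      have := key t0.2 hclq hac ha0 hc0 (by simp) (by simp)
      have hb0 : b ∈ t0.1 := by rw [this]; simp
      exact hdisj b hb0 hb1
    · obtain ⟨hne23, e, he2, he3⟩ := h23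
      have hea : e ≠ a := fun h => hne03 (Subtype.ext (key t0.2 t3.2 hac ha0 hc0 (h ▸ he3) hc3))
      have heb : e ≠ b := fun h => hne13 (Subtype.ext (key t1.2 t3.2 hbd hb1 hd1 (h ▸ he3) hd3))
      have hec : e ≠ c := fun h => hne02 (Subtype.ext (key t0.2 t2.2 hac ha0 hc0 ha2 (h ▸ he2)))
      -- triangle {a, c, e} : a-c in t0, a-e in t2, c-e in t3
      have hclq : G.IsNClique 3 {a, c, e} := by
        rw [is3Clique_triple_iff]
        exact ⟨t0.2.1 ha0 hc0 hac, t2.2.1 ha2 he2 (Ne.symm hea), t3.2.1 hc3 he3 (Ne.symm hec)⟩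
      have := key t0.2 hclq hac ha0 hc0 (by simp) (by simp)
      have he0 : e ∈ t0.1 := by rw [this]; simp
      exact hne02 (Subtype.ext (key t0.2 t2.2 hea he0 ha0 he2 ha2))
end

section
/- If G is a finite simple locally linear graph, then any two distinct nonadjacent vertices of the triangle graph G* of G have at most three common neighbors in G*. -/
open SimpleGraph Polynomial Matrix

variable {V : Type*}

/-- Any two distinct nonadjacent vertices of the triangle graph of a finite
locally linear graph have at most three common neighbors. -/
theorem triangleGraph_commonNeighbors_le_three [Fintype V] (G : SimpleGraph V)
    (hG : IsLocallyLinear G) (a b : {t : Finset V // G.IsNClique 3 t})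
    (hab : a ≠ b) (hna : ¬ (TriangleGraph G).Adj a b) :
    ((TriangleGraph G).commonNeighbors a b).ncard ≤ 3 := by
  classical
  have hdisj : ∀ v : V, ¬(v ∈ a.1 ∧ v ∈ b.1) := fun v hv => hna ⟨hab, v, hv.1, hv.2⟩
  -- two distinct 3-cliques sharing two vertices are equal
  have key : ∀ (t s : Finset V), G.IsNClique 3 t → G.IsNClique 3 s → ∀ x y : V, x ≠ y →
      x ∈ t → y ∈ t → x ∈ s → y ∈ s → t = s := by
    intro t s ht hs x y hxy hxt hyt hxs hys
    have hadj : G.Adj x y := ht.1 (Finset.mem_coe.mpr hxt) (Finset.mem_coe.mpr hyt) hxy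
    obtain ⟨u, _, hu⟩ := hG.2 hadj
    rw [hu t ⟨ht, hxt, hyt⟩, hu s ⟨hs, hxs, hys⟩]
  obtain ⟨v0, hv0⟩ : ∃ v, v ∈ a.1 := Finset.Nonempty.exists_mem
    (Finset.card_pos.mp (by rw [a.2.2]; norm_num))
  set S := (TriangleGraph G).commonNeighbors a b with hS
  let f : {t : Finset V // G.IsNClique 3 t} → V :=
    fun c => if h : ∃ v, v ∈ a.1 ∧ v ∈ c.1 then h.choose else v0
  have hmem : ∀ c ∈ S, ∃ v, v ∈ a.1 ∧ v ∈ c.1 := by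
    intro c hc
    exact ((SimpleGraph.mem_commonNeighbors _).mp hc).1.2
  have hfa : ∀ c ∈ S, f c ∈ a.1 ∧ f c ∈ c.1 := by
    intro c hc
    have h := hmem c hc
    simp only [f, dif_pos h]
    exact h.choose_spec
  have hmemb : ∀ c ∈ S, ∃ v, v ∈ b.1 ∧ v ∈ c.1 := by
    intro c hc
    exact ((SimpleGraph.mem_commonNeighbors _).mp hc).2.2
  have hle : S.ncard ≤ (↑a.1 : Set V).ncard := by
    apply Set.ncard_le_ncard_of_injOn f
    · intro c hc; exact Finset.mem_coe.mpr (hfa c hc).1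
    · intro c hc c' hc' hfe
      obtain ⟨hxa, hxc⟩ := hfa c hc
      obtain ⟨hxa', hxc'⟩ := hfa c' hc'
      rw [hfe] at hxc
      set x := f c' with hx
      obtain ⟨y, hyb, hyc⟩ := hmemb c hc
      obtain ⟨y', hyb', hyc'⟩ := hmemb c' hc'
      have hxy : x ≠ y := fun h => hdisj y ⟨h ▸ hxa', hyb⟩
      have hxy' : x ≠ y' := fun h => hdisj y' ⟨h ▸ hxa', hyb'⟩
      by_cases hyy : y = y'
      · subst hyy
        exact Subtype.ext (key c.1 c'.1 c.2 c'.2 x y hxy hxc hyc hxc' hyc')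
      · -- x adjacent to both y and y', and y ~ y', so {x,y,y'} is a triangle
        have haxy : G.Adj x y := c.2.1 (Finset.mem_coe.mpr hxc) (Finset.mem_coe.mpr hyc) hxy
        have haxy' : G.Adj x y' := c'.2.1 (Finset.mem_coe.mpr hxc') (Finset.mem_coe.mpr hyc') hxy'
        have hayy' : G.Adj y y' := b.2.1 (Finset.mem_coe.mpr hyb) (Finset.mem_coe.mpr hyb') hyy
        have htri : G.IsNClique 3 {x, y, y'} :=
          SimpleGraph.is3Clique_triple_iff.mpr ⟨haxy, haxy', hayy'⟩
        have hceq : c.1 = {x, y, y'} := key c.1 _ c.2 htri x y hxy hxc hyc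
          (by simp) (by simp)
        have hy'c : y' ∈ c.1 := by rw [hceq]; simp
        have : c.1 = b.1 := key c.1 b.1 c.2 b.2 y y' hyy hyc hy'c hyb hyb'
        exact absurd (Subtype.ext this).symm
          (((SimpleGraph.mem_commonNeighbors _).mp hc).2.1)
  calc S.ncard ≤ (↑a.1 : Set V).ncard := hle
    _ = 3 := by rw [Set.ncard_coe_finset, a.2.2]
end

section
/- If G is a finite simple locally linear graph, then the number of quadrilaterals (induced 4-cycles) in G equals the number of quadrilaterals (induced 4-cycles) in the triangle graph G* of G. -/
open SimpleGraph Polynomial Matrix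

variable {V : Type*}

open Classical in
lemma quad_char {W : Type*} (H : SimpleGraph W) (s : Set W) :
    s ∈ inducedCycleSets H 4 ↔ ∃ a b c d : W, s = {a,b,c,d} ∧
      a ≠ b ∧ a ≠ c ∧ a ≠ d ∧ b ≠ c ∧ b ≠ d ∧ c ≠ d ∧
      H.Adj a b ∧ H.Adj b c ∧ H.Adj c d ∧ H.Adj d a ∧ ¬H.Adj a c ∧ ¬H.Adj b d := by
  constructor
  · rintro ⟨-, ⟨φ⟩⟩
    have hmadj : ∀ i j : Fin 4, (cycleGraph 4).Adj i j ↔ H.Adj (φ.symm i).1 (φ.symm j).1 := by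
      intro i j
      rw [← φ.symm.map_adj_iff]
      rfl
    have hinj : ∀ i j : Fin 4, (φ.symm i).1 = (φ.symm j).1 → i = j := by
      intro i j h
      exact φ.symm.injective (Subtype.ext h)
    refine ⟨(φ.symm 0).1, (φ.symm 1).1, (φ.symm 2).1, (φ.symm 3).1, ?_, ?_, ?_, ?_, ?_, ?_, ?_,
      ?_, ?_, ?_, ?_, ?_, ?_⟩
    · ext x
      simp only [Set.mem_insert_iff, Set.mem_singleton_iff]
      constructor
      · intro hx
        have h4 : ∀ i : Fin 4, i = 0 ∨ i = 1 ∨ i = 2 ∨ i = 3 := by decide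
        have hx' : (φ.symm (φ ⟨x, hx⟩)).1 = x := by rw [φ.symm_apply_apply]
        rcases h4 (φ ⟨x, hx⟩) with h | h | h | h <;> rw [h] at hx' <;> tauto
      · rintro (rfl | rfl | rfl | rfl) <;> exact (φ.symm _).2
    all_goals first
      | (intro h; exact absurd (hinj _ _ h) (by decide))
      | (rw [← hmadj]; decide)
  · rintro ⟨a, b, c, d, rfl, hab, hac, had, hbc, hbd, hcd, Hab, Hbc, Hcd, Hda, Hac, Hbd⟩
    have ha : a ∈ ({a,b,c,d} : Set W) := by simp
    have hb : b ∈ ({a,b,c,d} : Set W) := by simp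
    have hc : c ∈ ({a,b,c,d} : Set W) := by simp
    have hd : d ∈ ({a,b,c,d} : Set W) := by simp
    constructor
    · rw [show ({a,b,c,d} : Set W) = ↑({a,b,c,d} : Finset W) by simp, Set.ncard_coe_finset]
      rw [Finset.card_insert_of_notMem (by simp [hab, hac, had]),
        Finset.card_insert_of_notMem (by simp [hbc, hbd]),
        Finset.card_insert_of_notMem (by simp [hcd]), Finset.card_singleton]
    · let g : Fin 4 → ({a,b,c,d} : Set W) := ![⟨a, ha⟩, ⟨b, hb⟩, ⟨c, hc⟩, ⟨d, hd⟩]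
      let f : ({a,b,c,d} : Set W) → Fin 4 := fun x =>
        if x.1 = a then 0 else if x.1 = b then 1 else if x.1 = c then 2 else 3
      have hfg : ∀ i, f (g i) = i := by
        intro i
        fin_cases i <;>
          simp [f, g, hab.symm, hac.symm, had.symm, hbc.symm, hbd.symm, hcd.symm]
      have hgf : ∀ x, g (f x) = x := by
        rintro ⟨x, hx⟩
        simp only [Set.mem_insert_iff, Set.mem_singleton_iff] at hx
        rcases hx with rfl | rfl | rfl | rfl <;>
          simp [f, g, hab.symm, hac.symm, had.symm, hbc.symm, hbd.symm, hcd.symm]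
      refine ⟨⟨⟨f, g, hgf, hfg⟩, ?_⟩⟩
      rintro ⟨x, hx⟩ ⟨y, hy⟩
      simp only [Set.mem_insert_iff, Set.mem_singleton_iff] at hx hy
      simp only [Equiv.coe_fn_mk, comap_adj, Function.Embedding.coe_subtype]
      rcases hx with rfl | rfl | rfl | rfl <;> rcases hy with rfl | rfl | rfl | rfl <;>
        simp only [f] <;>
        simp [hab, hac, had, hbc, hbd, hcd, hab.symm, hac.symm, had.symm, hbc.symm,
          hbd.symm, hcd.symm] <;>
        first
          | exact iff_of_true (by decide)
              (by first | assumption | exact Hab.symm | exact Hbc.symm | exact Hcd.symm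
                        | exact Hda.symm)
          | exact iff_of_false (by decide)
              (by first | assumption | exact fun h => Hac h.symm | exact fun h => Hbd h.symm
                        | exact H.loopless _)

section helpers

variable {G : SimpleGraph V}

lemma triClique_adj {t : Finset V} (ht : G.IsNClique 3 t) {u v : V}
    (hu : u ∈ t) (hv : v ∈ t) (huv : u ≠ v) : G.Adj u v :=
  ht.1 (Finset.mem_coe.2 hu) (Finset.mem_coe.2 hv) huv

lemma tri_eq (hG : IsLocallyLinear G) {x y : V} (hxy : G.Adj x y) {t t' : Finset V}
    (ht : G.IsNClique 3 t) (hx : x ∈ t) (hy : y ∈ t)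
    (ht' : G.IsNClique 3 t') (hx' : x ∈ t') (hy' : y ∈ t') : t = t' :=
  (hG.2 hxy).unique ⟨ht, hx, hy⟩ ⟨ht', hx', hy'⟩

lemma tri_inter_subsingleton (hG : IsLocallyLinear G) {t t' : Finset V}
    (ht : G.IsNClique 3 t) (ht' : G.IsNClique 3 t') (hne : t ≠ t')
    {u v : V} (hu : u ∈ t) (hu' : u ∈ t') (hv : v ∈ t) (hv' : v ∈ t') : u = v := by
  by_contra h
  exact hne (tri_eq hG (triClique_adj ht hu hv h) ht hu hv ht' hu' hv')

lemma quad_step (hG : IsLocallyLinear G) {a b c d : V}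
    (hab : a ≠ b) (hac : a ≠ c) (had : a ≠ d) (hbc : b ≠ c) (hbd : b ≠ d) (hcd : c ≠ d)
    (Hab : G.Adj a b) (Hbc : G.Adj b c) (Hcd : G.Adj c d) (Hda : G.Adj d a)
    (Hac : ¬G.Adj a c) (Hbd : ¬G.Adj b d) :
    ∃ T1 T2 T3 T4 : {t : Finset V // G.IsNClique 3 t},
      (a ∈ T1.1 ∧ b ∈ T1.1) ∧ (b ∈ T2.1 ∧ c ∈ T2.1) ∧ (c ∈ T3.1 ∧ d ∈ T3.1) ∧
      (d ∈ T4.1 ∧ a ∈ T4.1) ∧ T1 ≠ T2 ∧ T2 ≠ T3 ∧ T3 ≠ T4 ∧ T1 ≠ T4 ∧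
      ({T | ∃ u v : V, u ≠ v ∧ u ∈ T.1 ∧ v ∈ T.1 ∧ u ∈ ({a,b,c,d} : Set V) ∧
          v ∈ ({a,b,c,d} : Set V)} = {T1, T2, T3, T4}) ∧
      (({T1, T2, T3, T4} : Set _) ∈ inducedCycleSets (TriangleGraph G) 4) ∧
      (∀ T T' : {t : Finset V // G.IsNClique 3 t}, T ∈ ({T1,T2,T3,T4} : Set _) →
        T' ∈ ({T1,T2,T3,T4} : Set _) → T ≠ T' → ∀ v, v ∈ T.1 → v ∈ T'.1 →
          v ∈ ({a,b,c,d} : Set V)) := by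
  classical
  obtain ⟨tab, ⟨tab_cl, ha1, hb1⟩, -⟩ := hG.2 Hab
  obtain ⟨tbc, ⟨tbc_cl, hb2, hc2⟩, -⟩ := hG.2 Hbc
  obtain ⟨tcd, ⟨tcd_cl, hc3, hd3⟩, -⟩ := hG.2 Hcd
  obtain ⟨tda, ⟨tda_cl, hd4, ha4⟩, -⟩ := hG.2 Hda
  have hT12 : tab ≠ tbc := fun h => Hac (triClique_adj tbc_cl (h ▸ ha1) hc2 hac)
  have hT13 : tab ≠ tcd := fun h => Hac (triClique_adj tcd_cl (h ▸ ha1) hc3 hac)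
  have hT14 : tab ≠ tda := fun h => Hbd (triClique_adj tda_cl (h ▸ hb1) hd4 hbd)
  have hT23 : tbc ≠ tcd := fun h => Hbd (triClique_adj tcd_cl (h ▸ hb2) hd3 hbd)
  have hT24 : tbc ≠ tda := fun h => Hbd (triClique_adj tda_cl (h ▸ hb2) hd4 hbd)
  have hT34 : tcd ≠ tda := fun h => Hac (triClique_adj tda_cl ha4 (h ▸ hc3) hac)
  have N13 : ¬ (TriangleGraph G).Adj ⟨tab, tab_cl⟩ ⟨tcd, tcd_cl⟩ := by
    rintro ⟨-, v, hv1, hv2⟩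
    rcases eq_or_ne v a with rfl|hva
    · exact Hac (triClique_adj tcd_cl hv2 hc3 hac)
    rcases eq_or_ne v b with rfl|hvb
    · exact Hbd (triClique_adj tcd_cl hv2 hd3 hbd)
    rcases eq_or_ne v d with rfl|hvd
    · exact Hbd (triClique_adj tab_cl hb1 hv1 hbd)
    have hav : G.Adj a v := triClique_adj tab_cl ha1 hv1 (Ne.symm hva)
    have hdv : G.Adj d v := triClique_adj tcd_cl hd3 hv2 (Ne.symm hvd)
    have hadv : G.IsNClique 3 {a, d, v} := is3Clique_triple_iff.2 ⟨Hda.symm, hav, hdv⟩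
    have htab : tab = {a, d, v} := tri_eq hG hav tab_cl ha1 hv1 hadv (by simp) (by simp)
    have hb' : b ∈ ({a, d, v} : Finset V) := htab ▸ hb1
    simp only [Finset.mem_insert, Finset.mem_singleton] at hb'
    rcases hb' with rfl|rfl|rfl
    · exact hab rfl
    · exact hbd rfl
    · exact hvb rfl
  have N24 : ¬ (TriangleGraph G).Adj ⟨tbc, tbc_cl⟩ ⟨tda, tda_cl⟩ := by
    rintro ⟨-, v, hv1, hv2⟩
    rcases eq_or_ne v a with rfl|hva
    · exact Hac (triClique_adj tbc_cl hv1 hc2 hac)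
    rcases eq_or_ne v b with rfl|hvb
    · exact Hbd (triClique_adj tda_cl hv2 hd4 hbd)
    rcases eq_or_ne v c with rfl|hvc
    · exact Hac (triClique_adj tda_cl ha4 hv2 hac)
    have hbv : G.Adj b v := triClique_adj tbc_cl hb2 hv1 (Ne.symm hvb)
    have hav : G.Adj a v := triClique_adj tda_cl ha4 hv2 (Ne.symm hva)
    have habv : G.IsNClique 3 {a, b, v} := is3Clique_triple_iff.2 ⟨Hab, hav, hbv⟩
    have htbc : tbc = {a, b, v} := tri_eq hG hbv tbc_cl hb2 hv1 habv (by simp) (by simp)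
    have hc' : c ∈ ({a, b, v} : Finset V) := htbc ▸ hc2
    simp only [Finset.mem_insert, Finset.mem_singleton] at hc'
    rcases hc' with rfl|rfl|rfl
    · exact hac rfl
    · exact hbc rfl
    · exact hvc rfl
  refine ⟨⟨tab, tab_cl⟩, ⟨tbc, tbc_cl⟩, ⟨tcd, tcd_cl⟩, ⟨tda, tda_cl⟩,
    ⟨ha1, hb1⟩, ⟨hb2, hc2⟩, ⟨hc3, hd3⟩, ⟨hd4, ha4⟩,
    fun h => hT12 (congrArg Subtype.val h), fun h => hT23 (congrArg Subtype.val h),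
    fun h => hT34 (congrArg Subtype.val h), fun h => hT14 (congrArg Subtype.val h),
    ?_, ?_, ?_⟩
  · ext T
    simp only [Set.mem_setOf_eq, Set.mem_insert_iff, Set.mem_singleton_iff]
    constructor
    · rintro ⟨u, v, huv, hu, hv, hus, hvs⟩
      rcases hus with rfl|rfl|rfl|rfl <;> rcases hvs with rfl|rfl|rfl|rfl <;>
        first
        | exact absurd rfl huv
        | exact absurd (triClique_adj T.2 hu hv huv) Hac
        | exact absurd (triClique_adj T.2 hu hv huv) Hbd
        | exact absurd (triClique_adj T.2 hu hv huv) (fun h => Hac h.symm)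
        | exact absurd (triClique_adj T.2 hu hv huv) (fun h => Hbd h.symm)
        | exact Or.inl (Subtype.ext (tri_eq hG Hab T.2 hu hv tab_cl ha1 hb1))
        | exact Or.inl (Subtype.ext (tri_eq hG Hab T.2 hv hu tab_cl ha1 hb1))
        | exact Or.inr (Or.inl (Subtype.ext (tri_eq hG Hbc T.2 hu hv tbc_cl hb2 hc2)))
        | exact Or.inr (Or.inl (Subtype.ext (tri_eq hG Hbc T.2 hv hu tbc_cl hb2 hc2)))
        | exact Or.inr (Or.inr (Or.inl (Subtype.ext (tri_eq hG Hcd T.2 hu hv tcd_cl hc3 hd3))))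
        | exact Or.inr (Or.inr (Or.inl (Subtype.ext (tri_eq hG Hcd T.2 hv hu tcd_cl hc3 hd3))))
        | exact Or.inr (Or.inr (Or.inr (Subtype.ext (tri_eq hG Hda T.2 hu hv tda_cl hd4 ha4))))
        | exact Or.inr (Or.inr (Or.inr (Subtype.ext (tri_eq hG Hda T.2 hv hu tda_cl hd4 ha4))))
    · rintro (rfl|rfl|rfl|rfl)
      · exact ⟨a, b, hab, ha1, hb1, by simp, by simp⟩
      · exact ⟨b, c, hbc, hb2, hc2, by simp, by simp⟩
      · exact ⟨c, d, hcd, hc3, hd3, by simp, by simp⟩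
      · exact ⟨d, a, had.symm, hd4, ha4, by simp, by simp⟩
  · rw [quad_char]
    exact ⟨⟨tab, tab_cl⟩, ⟨tbc, tbc_cl⟩, ⟨tcd, tcd_cl⟩, ⟨tda, tda_cl⟩, rfl,
      fun h => hT12 (congrArg Subtype.val h), fun h => hT13 (congrArg Subtype.val h),
      fun h => hT14 (congrArg Subtype.val h), fun h => hT23 (congrArg Subtype.val h),
      fun h => hT24 (congrArg Subtype.val h), fun h => hT34 (congrArg Subtype.val h),
      ⟨fun h => hT12 (congrArg Subtype.val h), b, hb1, hb2⟩,
      ⟨fun h => hT23 (congrArg Subtype.val h), c, hc2, hc3⟩,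
      ⟨fun h => hT34 (congrArg Subtype.val h), d, hd3, hd4⟩,
      ⟨fun h => hT14 (congrArg Subtype.val h.symm), a, ha4, ha1⟩,
      N13, N24⟩
  · intro T T' hT hT' hTT' v hv hv'
    simp only [Set.mem_insert_iff, Set.mem_singleton_iff] at hT hT'
    show v ∈ ({a,b,c,d} : Set V)
    simp only [Set.mem_insert_iff, Set.mem_singleton_iff]
    rcases hT with rfl|rfl|rfl|rfl
    · rcases hT' with rfl|rfl|rfl|rfl
      · exact absurd rfl hTT'
      · exact Or.inr (Or.inl (tri_inter_subsingleton hG tab_cl tbc_cl hT12 hv hv' hb1 hb2))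
      · exact absurd ⟨hTT', v, hv, hv'⟩ N13
      · exact Or.inl (tri_inter_subsingleton hG tab_cl tda_cl hT14 hv hv' ha1 ha4)
    · rcases hT' with rfl|rfl|rfl|rfl
      · exact Or.inr (Or.inl (tri_inter_subsingleton hG tbc_cl tab_cl (Ne.symm hT12) hv hv' hb2 hb1))
      · exact absurd rfl hTT'
      · exact Or.inr (Or.inr (Or.inl (tri_inter_subsingleton hG tbc_cl tcd_cl hT23 hv hv' hc2 hc3)))
      · exact absurd ⟨hTT', v, hv, hv'⟩ N24
    · rcases hT' with rfl|rfl|rfl|rfl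
      · exact absurd ⟨Ne.symm hTT', v, hv', hv⟩ N13
      · exact Or.inr (Or.inr (Or.inl (tri_inter_subsingleton hG tcd_cl tbc_cl (Ne.symm hT23) hv hv' hc3 hc2)))
      · exact absurd rfl hTT'
      · exact Or.inr (Or.inr (Or.inr (tri_inter_subsingleton hG tcd_cl tda_cl hT34 hv hv' hd3 hd4)))
    · rcases hT' with rfl|rfl|rfl|rfl
      · exact Or.inl (tri_inter_subsingleton hG tda_cl tab_cl (Ne.symm hT14) hv hv' ha4 ha1)
      · exact absurd ⟨Ne.symm hTT', v, hv', hv⟩ N24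
      · exact Or.inr (Or.inr (Or.inr (tri_inter_subsingleton hG tda_cl tcd_cl (Ne.symm hT34) hv hv' hd4 hd3)))
      · exact absurd rfl hTT'

end helpers

/-- A finite locally linear graph has the same number of quadrilaterals
(induced 4-cycles) as its triangle graph. -/
theorem card_quadrilaterals_eq [Fintype V] (G : SimpleGraph V)
    (hG : IsLocallyLinear G) :
    (inducedCycleSets G 4).ncard = (inducedCycleSets (TriangleGraph G) 4).ncard := by
  classical
  have hbij : Set.BijOn
      (fun s : Set V => {T : {t : Finset V // G.IsNClique 3 t} |
        ∃ u v : V, u ≠ v ∧ u ∈ T.1 ∧ v ∈ T.1 ∧ u ∈ s ∧ v ∈ s})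
      (inducedCycleSets G 4) (inducedCycleSets (TriangleGraph G) 4) := by
    refine ⟨fun s hs => ?_, fun s hs s' hs' hss => ?_, fun t ht => ?_⟩
    · rw [quad_char] at hs
      obtain ⟨a,b,c,d, rfl, hab,hac,had,hbc,hbd,hcd,Hab,Hbc,Hcd,Hda,Hac,Hbd⟩ := hs
      obtain ⟨T1,T2,T3,T4, -, -, -, -, -, -, -, -, hfs, hquad, -⟩ :=
        quad_step hG hab hac had hbc hbd hcd Hab Hbc Hcd Hda Hac Hbd
      show {T : {t : Finset V // G.IsNClique 3 t} |
        ∃ u v : V, u ≠ v ∧ u ∈ T.1 ∧ v ∈ T.1 ∧ u ∈ ({a,b,c,d} : Set V) ∧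
          v ∈ ({a,b,c,d} : Set V)} ∈ inducedCycleSets (TriangleGraph G) 4
      rw [hfs]
      exact hquad
    · rw [quad_char] at hs hs'
      obtain ⟨a,b,c,d, rfl, hab,hac,had,hbc,hbd,hcd,Hab,Hbc,Hcd,Hda,Hac,Hbd⟩ := hs
      obtain ⟨a',b',c',d', rfl, hab',hac',had',hbc',hbd',hcd',
        Hab',Hbc',Hcd',Hda',Hac',Hbd'⟩ := hs'
      obtain ⟨S1,S2,S3,S4, ⟨haS1,hbS1⟩, ⟨hbS2,hcS2⟩, ⟨hcS3,hdS3⟩, ⟨hdS4,haS4⟩,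
        hS12, hS23, hS34, hS14, hfs, -, hshare⟩ :=
        quad_step hG hab hac had hbc hbd hcd Hab Hbc Hcd Hda Hac Hbd
      obtain ⟨T1,T2,T3,T4, ⟨haT1,hbT1⟩, ⟨hbT2,hcT2⟩, ⟨hcT3,hdT3⟩, ⟨hdT4,haT4⟩,
        hT12, hT23, hT34, hT14, hfs', -, hshare'⟩ :=
        quad_step hG hab' hac' had' hbc' hbd' hcd' Hab' Hbc' Hcd' Hda' Hac' Hbd'
      have hST : ({S1,S2,S3,S4} : Set _) = {T1,T2,T3,T4} := by
        rw [← hfs, ← hfs']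
        exact hss
      have memST : ∀ S, S ∈ ({S1,S2,S3,S4} : Set _) → S ∈ ({T1,T2,T3,T4} : Set _) :=
        fun S h => hST ▸ h
      have memTS : ∀ S, S ∈ ({T1,T2,T3,T4} : Set _) → S ∈ ({S1,S2,S3,S4} : Set _) :=
        fun S h => hST.symm ▸ h
      apply Set.Subset.antisymm
      · intro x hx
        simp only [Set.mem_insert_iff, Set.mem_singleton_iff] at hx
        rcases hx with rfl|rfl|rfl|rfl
        · exact hshare' S1 S4 (memST _ (by simp)) (memST _ (by simp)) hS14 x haS1 haS4
        · exact hshare' S1 S2 (memST _ (by simp)) (memST _ (by simp)) hS12 x hbS1 hbS2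
        · exact hshare' S2 S3 (memST _ (by simp)) (memST _ (by simp)) hS23 x hcS2 hcS3
        · exact hshare' S3 S4 (memST _ (by simp)) (memST _ (by simp)) hS34 x hdS3 hdS4
      · intro x hx
        simp only [Set.mem_insert_iff, Set.mem_singleton_iff] at hx
        rcases hx with rfl|rfl|rfl|rfl
        · exact hshare T1 T4 (memTS _ (by simp)) (memTS _ (by simp)) hT14 x haT1 haT4
        · exact hshare T1 T2 (memTS _ (by simp)) (memTS _ (by simp)) hT12 x hbT1 hbT2
        · exact hshare T2 T3 (memTS _ (by simp)) (memTS _ (by simp)) hT23 x hcT2 hcT3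
        · exact hshare T3 T4 (memTS _ (by simp)) (memTS _ (by simp)) hT34 x hdT3 hdT4
    · rw [quad_char] at ht
      obtain ⟨T1,T2,T3,T4, rfl, h12,h13,h14,h23,h24,h34, A12,A23,A34,A41,N13,N24⟩ := ht
      obtain ⟨-, v12, hv12_1, hv12_2⟩ := A12
      obtain ⟨-, v23, hv23_2, hv23_3⟩ := A23
      obtain ⟨-, v34, hv34_3, hv34_4⟩ := A34
      obtain ⟨-, v41, hv41_4, hv41_1⟩ := A41
      have D13 : ∀ v : V, v ∈ T1.1 → v ∈ T3.1 → False := fun v h h' => N13 ⟨h13, v, h, h'⟩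
      have D24 : ∀ v : V, v ∈ T2.1 → v ∈ T4.1 → False := fun v h h' => N24 ⟨h24, v, h, h'⟩
      have n1 : v12 ≠ v23 := fun h => D13 v12 hv12_1 (by rw [h]; exact hv23_3)
      have n2 : v12 ≠ v34 := fun h => D13 v12 hv12_1 (by rw [h]; exact hv34_3)
      have n3 : v12 ≠ v41 := fun h => D24 v12 hv12_2 (by rw [h]; exact hv41_4)
      have n4 : v23 ≠ v34 := fun h => D24 v23 hv23_2 (by rw [h]; exact hv34_4)
      have n5 : v23 ≠ v41 := fun h => D13 v23 (by rw [h]; exact hv41_1) hv23_3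
      have n6 : v34 ≠ v41 := fun h => D13 v34 (by rw [h]; exact hv41_1) hv34_3
      have E1 : G.Adj v12 v23 := triClique_adj T2.2 hv12_2 hv23_2 n1
      have E2 : G.Adj v23 v34 := triClique_adj T3.2 hv23_3 hv34_3 n4
      have E3 : G.Adj v34 v41 := triClique_adj T4.2 hv34_4 hv41_4 n6
      have E4 : G.Adj v41 v12 := triClique_adj T1.2 hv41_1 hv12_1 (Ne.symm n3)
      have NA13 : ¬G.Adj v12 v34 := by
        intro h
        have hcl : G.IsNClique 3 {v12, v23, v34} := is3Clique_triple_iff.2 ⟨E1, h, E2⟩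
        have h2 : T2.1 = {v12, v23, v34} :=
          tri_eq hG E1 T2.2 hv12_2 hv23_2 hcl (by simp) (by simp)
        have : v34 ∈ T2.1 := by rw [h2]; simp
        exact D24 v34 this hv34_4
      have NA24 : ¬G.Adj v23 v41 := by
        intro h
        have hcl : G.IsNClique 3 {v23, v34, v41} := is3Clique_triple_iff.2 ⟨E2, h, E3⟩
        have h3 : T3.1 = {v23, v34, v41} :=
          tri_eq hG E2 T3.2 hv23_3 hv34_3 hcl (by simp) (by simp)
        have : v41 ∈ T3.1 := by rw [h3]; simp
        exact D13 v41 hv41_1 this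
      have hsrc : ({v12, v23, v34, v41} : Set V) ∈ inducedCycleSets G 4 :=
        (quad_char G _).2 ⟨v12, v23, v34, v41, rfl, n1, n2, n3, n4, n5, n6,
          E1, E2, E3, E4, NA13, NA24⟩
      refine ⟨{v12, v23, v34, v41}, hsrc, ?_⟩
      ext T
      simp only [Set.mem_setOf_eq, Set.mem_insert_iff, Set.mem_singleton_iff]
      constructor
      · rintro ⟨u, v, huv, hu, hv, hus, hvs⟩
        rcases hus with rfl|rfl|rfl|rfl <;> rcases hvs with rfl|rfl|rfl|rfl
        · exact absurd rfl huv
        · exact Or.inr (Or.inl (Subtype.ext (tri_eq hG E1 T.2 hu hv T2.2 hv12_2 hv23_2)))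
        · exact absurd (triClique_adj T.2 hu hv huv) NA13
        · exact Or.inl (Subtype.ext (tri_eq hG E4 T.2 hv hu T1.2 hv41_1 hv12_1))
        · exact Or.inr (Or.inl (Subtype.ext (tri_eq hG E1 T.2 hv hu T2.2 hv12_2 hv23_2)))
        · exact absurd rfl huv
        · exact Or.inr (Or.inr (Or.inl (Subtype.ext (tri_eq hG E2 T.2 hu hv T3.2 hv23_3 hv34_3))))
        · exact absurd (triClique_adj T.2 hu hv huv) NA24
        · exact absurd (triClique_adj T.2 hu hv huv) (fun h => NA13 h.symm)
        · exact Or.inr (Or.inr (Or.inl (Subtype.ext (tri_eq hG E2 T.2 hv hu T3.2 hv23_3 hv34_3))))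
        · exact absurd rfl huv
        · exact Or.inr (Or.inr (Or.inr (Subtype.ext (tri_eq hG E3 T.2 hu hv T4.2 hv34_4 hv41_4))))
        · exact Or.inl (Subtype.ext (tri_eq hG E4 T.2 hu hv T1.2 hv41_1 hv12_1))
        · exact absurd (triClique_adj T.2 hu hv huv) (fun h => NA24 h.symm)
        · exact Or.inr (Or.inr (Or.inr (Subtype.ext (tri_eq hG E3 T.2 hv hu T4.2 hv34_4 hv41_4))))
        · exact absurd rfl huv
      · rintro (rfl|rfl|rfl|rfl)
        · exact ⟨v41, v12, Ne.symm n3, hv41_1, hv12_1, by simp, by simp⟩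
        · exact ⟨v12, v23, n1, hv12_2, hv23_2, by simp, by simp⟩
        · exact ⟨v23, v34, n4, hv23_3, hv34_3, by simp, by simp⟩
        · exact ⟨v34, v41, n6, hv34_4, hv41_4, by simp, by simp⟩
  rw [← hbij.image_eq, Set.ncard_image_of_injOn hbij.injOn]
end

section
/- If G is a finite simple locally linear graph, then the number of pentagons (induced 5-cycles) in G equals the number of pentagons (induced 5-cycles) in the triangle graph G* of G. -/
open SimpleGraph Polynomial Matrix

variable {V : Type*}

section Pent
variable {W : Type*} {H : SimpleGraph W} {a b c d e : W}

/-- An explicit labelled pentagon. -/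
def LPent (H : SimpleGraph W) (a b c d e : W) : Prop :=
  H.Adj a b ∧ H.Adj b c ∧ H.Adj c d ∧ H.Adj d e ∧ H.Adj e a ∧
  ¬H.Adj a c ∧ ¬H.Adj b d ∧ ¬H.Adj c e ∧ ¬H.Adj d a ∧ ¬H.Adj e b

lemma LPent.rot (h : LPent H a b c d e) : LPent H b c d e a := by
  obtain ⟨h1,h2,h3,h4,h5,n1,n2,n3,n4,n5⟩ := h
  exact ⟨h2,h3,h4,h5,h1.symm.symm,n2,n3,n4,n5,n1⟩

lemma LPent.refl' (h : LPent H a b c d e) : LPent H a e d c b := by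
  obtain ⟨h1,h2,h3,h4,h5,n1,n2,n3,n4,n5⟩ := h
  exact ⟨h5.symm, h4.symm, h3.symm, h2.symm, h1.symm,
    fun h => n4 h.symm, fun h => n3 h.symm, fun h => n2 h.symm,
    fun h => n1 h.symm, fun h => n5 h.symm⟩

lemma LPent.ne (h : LPent H a b c d e) :
    a≠b ∧ a≠c ∧ a≠d ∧ a≠e ∧ b≠c ∧ b≠d ∧ b≠e ∧ c≠d ∧ c≠e ∧ d≠e := by
  obtain ⟨h1,h2,h3,h4,h5,n1,n2,n3,n4,n5⟩ := h
  refine ⟨h1.ne, ?_, ?_, h5.ne', h2.ne, ?_, ?_, h3.ne, ?_, h4.ne⟩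
  · rintro rfl; exact n4 h3.symm
  · rintro rfl; exact n2 h1.symm
  · rintro rfl; exact n4 h1.symm
  · rintro rfl; exact n2 h4.symm
  · rintro rfl; exact n1 h5.symm

lemma lpent_ncard (h : LPent H a b c d e) : ({a,b,c,d,e} : Set W).ncard = 5 := by
  classical
  obtain ⟨hab,hac,had,hae,hbc,hbd,hbe,hcd,hce,hde⟩ := h.ne
  rw [show ({a,b,c,d,e} : Set W) = (({a,b,c,d,e} : Finset W) : Set W) by simp,
    Set.ncard_coe_finset]
  simp [Finset.card_insert_of_notMem, hab, hac, had, hae, hbc, hbd, hbe, hcd, hce, hde]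

lemma mem_ics_iff (H : SimpleGraph W) (s : Set W) :
    (s.ncard = 5 ∧ Nonempty (H.induce s ≃g cycleGraph 5)) ↔
      ∃ a b c d e : W, s = {a,b,c,d,e} ∧ LPent H a b c d e := by
  constructor
  · rintro ⟨hcard, ⟨φ⟩⟩
    set f : Fin 5 → W := fun i => ((φ.symm i : s) : W) with hf
    have hrange : Set.range f = s := by
      have : Set.range f = Subtype.val '' Set.range φ.symm := by
        rw [← Set.range_comp]; rfl
      rw [this, φ.symm.surjective.range_eq, Set.image_univ, Subtype.range_coe]
    have hadj : ∀ i j : Fin 5, H.Adj (f i) (f j) ↔ (cycleGraph 5).Adj i j := by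
      intro i j
      exact φ.symm.map_rel_iff
    refine ⟨f 0, f 1, f 2, f 3, f 4, ?_, ?_⟩
    · rw [← hrange]
      ext x
      simp only [Set.mem_range, Set.mem_insert_iff, Set.mem_singleton_iff]
      constructor
      · rintro ⟨i, rfl⟩; fin_cases i <;> tauto
      · rintro (rfl|rfl|rfl|rfl|rfl)
        exacts [⟨0, rfl⟩, ⟨1, rfl⟩, ⟨2, rfl⟩, ⟨3, rfl⟩, ⟨4, rfl⟩]
    · exact ⟨(hadj 0 1).mpr (by decide), (hadj 1 2).mpr (by decide),
        (hadj 2 3).mpr (by decide), (hadj 3 4).mpr (by decide), (hadj 4 0).mpr (by decide),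
        fun h => (by decide : ¬(cycleGraph 5).Adj 0 2) ((hadj 0 2).mp h),
        fun h => (by decide : ¬(cycleGraph 5).Adj 1 3) ((hadj 1 3).mp h),
        fun h => (by decide : ¬(cycleGraph 5).Adj 2 4) ((hadj 2 4).mp h),
        fun h => (by decide : ¬(cycleGraph 5).Adj 3 0) ((hadj 3 0).mp h),
        fun h => (by decide : ¬(cycleGraph 5).Adj 4 1) ((hadj 4 1).mp h)⟩
  · rintro ⟨a, b, c, d, e, rfl, hp⟩
    refine ⟨lpent_ncard hp, ?_⟩
    obtain ⟨hab,hac,had,hae,hbc,hbd,hbe,hcd,hce,hde⟩ := hp.ne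
    obtain ⟨h1,h2,h3,h4,h5,n1,n2,n3,n4,n5⟩ := hp
    have ha : a ∈ ({a,b,c,d,e} : Set W) := by simp
    have hb : b ∈ ({a,b,c,d,e} : Set W) := by simp
    have hc : c ∈ ({a,b,c,d,e} : Set W) := by simp
    have hd : d ∈ ({a,b,c,d,e} : Set W) := by simp
    have he : e ∈ ({a,b,c,d,e} : Set W) := by simp
    let g : Fin 5 → ({a,b,c,d,e} : Set W) := ![⟨a, ha⟩, ⟨b, hb⟩, ⟨c, hc⟩, ⟨d, hd⟩, ⟨e, he⟩]
    have hginj : Function.Injective g := by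
      intro i j hij
      fin_cases i <;> fin_cases j <;> simp_all [g, Subtype.ext_iff]
    have hgsurj : Function.Surjective g := by
      rintro ⟨x, hx⟩
      simp only [Set.mem_insert_iff, Set.mem_singleton_iff] at hx
      rcases hx with rfl|rfl|rfl|rfl|rfl
      exacts [⟨0, rfl⟩, ⟨1, rfl⟩, ⟨2, rfl⟩, ⟨3, rfl⟩, ⟨4, rfl⟩]
    refine ⟨(SimpleGraph.Iso.symm ⟨Equiv.ofBijective g ⟨hginj, hgsurj⟩, ?_⟩)⟩
    intro i j
    show (H.induce _).Adj (g i) (g j) ↔ _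
    fin_cases i <;> fin_cases j <;>
      first
      | exact iff_of_false (SimpleGraph.irrefl _) (by decide)
      | exact iff_of_true h1 (by decide)
      | exact iff_of_true h1.symm (by decide)
      | exact iff_of_true h2 (by decide)
      | exact iff_of_true h2.symm (by decide)
      | exact iff_of_true h3 (by decide)
      | exact iff_of_true h3.symm (by decide)
      | exact iff_of_true h4 (by decide)
      | exact iff_of_true h4.symm (by decide)
      | exact iff_of_true h5 (by decide)
      | exact iff_of_true h5.symm (by decide)
      | exact iff_of_false n1 (by decide)
      | exact iff_of_false (fun h => n1 h.symm) (by decide)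
      | exact iff_of_false n2 (by decide)
      | exact iff_of_false (fun h => n2 h.symm) (by decide)
      | exact iff_of_false n3 (by decide)
      | exact iff_of_false (fun h => n3 h.symm) (by decide)
      | exact iff_of_false n4 (by decide)
      | exact iff_of_false (fun h => n4 h.symm) (by decide)
      | exact iff_of_false n5 (by decide)
      | exact iff_of_false (fun h => n5 h.symm) (by decide)

end Pent

section LL
variable {G : SimpleGraph V}

lemma clique3_adj {t : Finset V} (ht : G.IsNClique 3 t) {x y : V}
    (hx : x ∈ t) (hy : y ∈ t) (hxy : x ≠ y) : G.Adj x y :=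
  ht.1 (Finset.mem_coe.mpr hx) (Finset.mem_coe.mpr hy) hxy

/-- The unique triangle containing a given edge. -/
noncomputable def tri (hG : IsLocallyLinear G) {x y : V} (h : G.Adj x y) : Finset V :=
  (hG.2 h).exists.choose

lemma tri_spec (hG : IsLocallyLinear G) {x y : V} (h : G.Adj x y) :
    G.IsNClique 3 (tri hG h) ∧ x ∈ tri hG h ∧ y ∈ tri hG h :=
  (hG.2 h).exists.choose_spec

lemma tri_unique (hG : IsLocallyLinear G) {x y : V} (h : G.Adj x y) {t : Finset V}
    (ht : G.IsNClique 3 t) (hx : x ∈ t) (hy : y ∈ t) : t = tri hG h :=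
  (hG.2 h).unique ⟨ht, hx, hy⟩ (tri_spec hG h)

/-- The unique triangle containing a given edge, as a vertex of the triangle graph. -/
noncomputable def triS (hG : IsLocallyLinear G) {x y : V} (h : G.Adj x y) :
    {t : Finset V // G.IsNClique 3 t} := ⟨tri hG h, (tri_spec hG h).1⟩

lemma tri_inter (hG : IsLocallyLinear G) {A B : Finset V} (hA : G.IsNClique 3 A)
    (hB : G.IsNClique 3 B) (hAB : A ≠ B) {x y : V} (hxA : x ∈ A) (hxB : x ∈ B)
    (hyA : y ∈ A) (hyB : y ∈ B) : x = y := by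
  by_contra hne
  have hadj := clique3_adj hA hxA hyA hne
  exact hAB ((tri_unique hG hadj hA hxA hyA).trans (tri_unique hG hadj hB hxB hyB).symm)

lemma tri_consec_ne (hG : IsLocallyLinear G) {a b c : V} (hab : G.Adj a b) (hbc : G.Adj b c)
    (hnac : ¬G.Adj a c) (hac : a ≠ c) : tri hG hab ≠ tri hG hbc := by
  intro hEq
  have hcmem : c ∈ tri hG hab := hEq ▸ (tri_spec hG hbc).2.2
  exact hnac (clique3_adj (tri_spec hG hab).1 (tri_spec hG hab).2.1 hcmem hac)

lemma tri_disj02 (hG : IsLocallyLinear G) {a b c d e : V} (hp : LPent G a b c d e)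
    (hab : G.Adj a b) (hcd : G.Adj c d) :
    ∀ v, v ∈ tri hG hab → v ∈ tri hG hcd → False := by
  classical
  obtain ⟨ne_ab, ne_ac, ne_ad, ne_ae, ne_bc, ne_bd, ne_be, ne_cd, ne_ce, ne_de⟩ := hp.ne
  obtain ⟨h1,h2,h3,h4,h5,n1,n2,n3,n4,n5⟩ := hp
  intro v hv1 hv2
  obtain ⟨hT1, haT1, hbT1⟩ := tri_spec hG hab
  obtain ⟨hT2, hcT2, hdT2⟩ := tri_spec hG hcd
  by_cases hvb : v = b
  · exact n2 (clique3_adj hT2 (hvb ▸ hv2) hdT2 ne_bd)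
  by_cases hvc : v = c
  · exact n1 (clique3_adj hT1 haT1 (hvc ▸ hv1) ne_ac)
  have hadj_vb : G.Adj v b := clique3_adj hT1 hv1 hbT1 hvb
  have hadj_vc : G.Adj v c := clique3_adj hT2 hv2 hcT2 hvc
  have htri : G.IsNClique 3 {v, b, c} := is3Clique_triple_iff.mpr ⟨hadj_vb, hadj_vc, h2⟩
  have hc_mem : c ∈ tri hG hab := by
    have e1 := tri_unique hG hadj_vb hT1 hv1 hbT1
    have e2 := tri_unique hG hadj_vb htri (by simp) (by simp)
    rw [e1, ← e2]; simp
  exact n1 (clique3_adj hT1 haT1 hc_mem ne_ac)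

lemma skip_nonadj (hG : IsLocallyLinear G) {A : Finset V} (hA : G.IsNClique 3 A) {x y z : V}
    (hxA : x ∈ A) (hyA : y ∈ A) (hxy : x ≠ y) (hyz : G.Adj y z) (hzA : z ∉ A) :
    ¬G.Adj x z := by
  classical
  intro hxz
  have hadjxy := clique3_adj hA hxA hyA hxy
  have htri : G.IsNClique 3 {x, y, z} := is3Clique_triple_iff.mpr ⟨hadjxy, hxz, hyz⟩
  have e1 := tri_unique hG hadjxy hA hxA hyA
  have e2 := tri_unique hG hadjxy htri (by simp) (by simp)
  exact hzA (by rw [e1, ← e2]; simp)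

lemma pent_tri (hG : IsLocallyLinear G) {a b c d e : V} (hp : LPent G a b c d e)
    (hab : G.Adj a b) (hbc : G.Adj b c) (hcd : G.Adj c d) (hde : G.Adj d e) (hea : G.Adj e a) :
    LPent (TriangleGraph G) (triS hG hab) (triS hG hbc) (triS hG hcd) (triS hG hde)
      (triS hG hea) := by
  obtain ⟨ne_ab, ne_ac, ne_ad, ne_ae, ne_bc, ne_bd, ne_be, ne_cd, ne_ce, ne_de⟩ := hp.ne
  obtain ⟨h1,h2,h3,h4,h5,n1,n2,n3,n4,n5⟩ := hp
  refine ⟨⟨fun h => tri_consec_ne hG hab hbc n1 ne_ac (congrArg Subtype.val h),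
      b, (tri_spec hG hab).2.2, (tri_spec hG hbc).2.1⟩,
    ⟨fun h => tri_consec_ne hG hbc hcd n2 ne_bd (congrArg Subtype.val h),
      c, (tri_spec hG hbc).2.2, (tri_spec hG hcd).2.1⟩,
    ⟨fun h => tri_consec_ne hG hcd hde n3 ne_ce (congrArg Subtype.val h),
      d, (tri_spec hG hcd).2.2, (tri_spec hG hde).2.1⟩,
    ⟨fun h => tri_consec_ne hG hde hea n4 (Ne.symm ne_ad) (congrArg Subtype.val h),
      e, (tri_spec hG hde).2.2, (tri_spec hG hea).2.1⟩,
    ⟨fun h => tri_consec_ne hG hea hab n5 (Ne.symm ne_be) (congrArg Subtype.val h),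
      a, (tri_spec hG hea).2.2, (tri_spec hG hab).2.1⟩,
    fun h => tri_disj02 hG ⟨h1,h2,h3,h4,h5,n1,n2,n3,n4,n5⟩ hab hcd h.2.choose
      h.2.choose_spec.1 h.2.choose_spec.2,
    fun h => tri_disj02 hG (LPent.rot ⟨h1,h2,h3,h4,h5,n1,n2,n3,n4,n5⟩) hbc hde h.2.choose
      h.2.choose_spec.1 h.2.choose_spec.2,
    fun h => tri_disj02 hG ((LPent.rot ∘ LPent.rot) ⟨h1,h2,h3,h4,h5,n1,n2,n3,n4,n5⟩) hcd hea
      h.2.choose h.2.choose_spec.1 h.2.choose_spec.2,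
    fun h => tri_disj02 hG ((LPent.rot ∘ LPent.rot ∘ LPent.rot) ⟨h1,h2,h3,h4,h5,n1,n2,n3,n4,n5⟩)
      hde hab h.2.choose h.2.choose_spec.1 h.2.choose_spec.2,
    fun h => tri_disj02 hG ((LPent.rot ∘ LPent.rot ∘ LPent.rot ∘ LPent.rot)
      ⟨h1,h2,h3,h4,h5,n1,n2,n3,n4,n5⟩) hea hbc h.2.choose h.2.choose_spec.1 h.2.choose_spec.2⟩

/-- Map sending a vertex set to the set of triangles containing two of its vertices. -/
def Fmap (G : SimpleGraph V) : Set V → Set {t : Finset V // G.IsNClique 3 t} :=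
  fun s => {T | ∃ x ∈ s, ∃ y ∈ s, x ≠ y ∧ x ∈ T.1 ∧ y ∈ T.1}

/-- Map sending a set of triangles to the set of vertices shared by two of them. -/
def Gmap (G : SimpleGraph V) : Set {t : Finset V // G.IsNClique 3 t} → Set V :=
  fun S => {v | ∃ T ∈ S, ∃ T' ∈ S, T ≠ T' ∧ v ∈ T.1 ∧ v ∈ T'.1}

lemma Fmap_pent (hG : IsLocallyLinear G) {a b c d e : V} (hp : LPent G a b c d e)
    (hab : G.Adj a b) (hbc : G.Adj b c) (hcd : G.Adj c d) (hde : G.Adj d e) (hea : G.Adj e a) :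
    Fmap G {a,b,c,d,e} =
      {triS hG hab, triS hG hbc, triS hG hcd, triS hG hde, triS hG hea} := by
  obtain ⟨ne_ab, ne_ac, ne_ad, ne_ae, ne_bc, ne_bd, ne_be, ne_cd, ne_ce, ne_de⟩ := hp.ne
  obtain ⟨h1,h2,h3,h4,h5,n1,n2,n3,n4,n5⟩ := hp
  have key : ∀ (T : {t : Finset V // G.IsNClique 3 t}) (p q : V) (h : G.Adj p q),
      p ∈ T.1 → q ∈ T.1 → T = triS hG h :=
    fun T p q h hp1 hq1 => Subtype.ext (tri_unique hG h T.2 hp1 hq1)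
  ext T
  simp only [Fmap, Set.mem_setOf_eq, Set.mem_insert_iff, Set.mem_singleton_iff]
  constructor
  · rintro ⟨x, hx, y, hy, hxy, hxT, hyT⟩
    have hadj : G.Adj x y := clique3_adj T.2 hxT hyT hxy
    rcases hx with rfl|rfl|rfl|rfl|rfl <;> rcases hy with rfl|rfl|rfl|rfl|rfl <;>
      first
      | exact (hxy rfl).elim
      | exact (n1 hadj).elim
      | exact (n2 hadj).elim
      | exact (n3 hadj).elim
      | exact (n4 hadj).elim
      | exact (n5 hadj).elim
      | exact (n1 hadj.symm).elim
      | exact (n2 hadj.symm).elim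
      | exact (n3 hadj.symm).elim
      | exact (n4 hadj.symm).elim
      | exact (n5 hadj.symm).elim
      | exact Or.inl (key T _ _ hab hxT hyT)
      | exact Or.inl (key T _ _ hab hyT hxT)
      | exact Or.inr (Or.inl (key T _ _ hbc hxT hyT))
      | exact Or.inr (Or.inl (key T _ _ hbc hyT hxT))
      | exact Or.inr (Or.inr (Or.inl (key T _ _ hcd hxT hyT)))
      | exact Or.inr (Or.inr (Or.inl (key T _ _ hcd hyT hxT)))
      | exact Or.inr (Or.inr (Or.inr (Or.inl (key T _ _ hde hxT hyT))))
      | exact Or.inr (Or.inr (Or.inr (Or.inl (key T _ _ hde hyT hxT))))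
      | exact Or.inr (Or.inr (Or.inr (Or.inr (key T _ _ hea hxT hyT))))
      | exact Or.inr (Or.inr (Or.inr (Or.inr (key T _ _ hea hyT hxT))))
  · rintro (rfl|rfl|rfl|rfl|rfl)
    · exact ⟨a, by simp, b, by simp, ne_ab, (tri_spec hG hab).2.1, (tri_spec hG hab).2.2⟩
    · exact ⟨b, by simp, c, by simp, ne_bc, (tri_spec hG hbc).2.1, (tri_spec hG hbc).2.2⟩
    · exact ⟨c, by simp, d, by simp, ne_cd, (tri_spec hG hcd).2.1, (tri_spec hG hcd).2.2⟩
    · exact ⟨d, by simp, e, by simp, ne_de, (tri_spec hG hde).2.1, (tri_spec hG hde).2.2⟩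
    · exact ⟨e, by simp, a, by simp, Ne.symm ne_ae, (tri_spec hG hea).2.1, (tri_spec hG hea).2.2⟩

lemma Gmap_pent (hG : IsLocallyLinear G) {a b c d e : V} (hp : LPent G a b c d e)
    (hab : G.Adj a b) (hbc : G.Adj b c) (hcd : G.Adj c d) (hde : G.Adj d e) (hea : G.Adj e a) :
    Gmap G {triS hG hab, triS hG hbc, triS hG hcd, triS hG hde, triS hG hea}
      = ({a,b,c,d,e} : Set V) := by
  obtain ⟨Q1,Q2,Q3,Q4,Q5,M1,M2,M3,M4,M5⟩ := pent_tri hG hp hab hbc hcd hde hea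
  have sh : ∀ {p q r : V} (hpq : G.Adj p q) (hqr : G.Adj q r),
      triS hG hpq ≠ triS hG hqr → ∀ w, w ∈ tri hG hpq → w ∈ tri hG hqr → w = q :=
    fun {p q r} hpq hqr hne w hw hw' =>
      tri_inter hG (tri_spec hG hpq).1 (tri_spec hG hqr).1
        (fun h => hne (Subtype.ext h)) hw hw' (tri_spec hG hpq).2.2 (tri_spec hG hqr).2.1
  ext v
  simp only [Gmap, Set.mem_setOf_eq, Set.mem_insert_iff, Set.mem_singleton_iff]
  constructor
  · rintro ⟨T, hT, T', hT', hne, hvT, hvT'⟩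
    rcases hT with rfl|rfl|rfl|rfl|rfl <;> rcases hT' with rfl|rfl|rfl|rfl|rfl <;>
      first
      | exact (hne rfl).elim
      | exact (M1 ⟨hne, v, hvT, hvT'⟩).elim
      | exact (M1 ⟨Ne.symm hne, v, hvT', hvT⟩).elim
      | exact (M2 ⟨hne, v, hvT, hvT'⟩).elim
      | exact (M2 ⟨Ne.symm hne, v, hvT', hvT⟩).elim
      | exact (M3 ⟨hne, v, hvT, hvT'⟩).elim
      | exact (M3 ⟨Ne.symm hne, v, hvT', hvT⟩).elim
      | exact (M4 ⟨hne, v, hvT, hvT'⟩).elim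
      | exact (M4 ⟨Ne.symm hne, v, hvT', hvT⟩).elim
      | exact (M5 ⟨hne, v, hvT, hvT'⟩).elim
      | exact (M5 ⟨Ne.symm hne, v, hvT', hvT⟩).elim
      | exact Or.inr (Or.inl (sh hab hbc hne v hvT hvT'))
      | exact Or.inr (Or.inl (sh hab hbc (Ne.symm hne) v hvT' hvT))
      | exact Or.inr (Or.inr (Or.inl (sh hbc hcd hne v hvT hvT')))
      | exact Or.inr (Or.inr (Or.inl (sh hbc hcd (Ne.symm hne) v hvT' hvT)))
      | exact Or.inr (Or.inr (Or.inr (Or.inl (sh hcd hde hne v hvT hvT'))))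
      | exact Or.inr (Or.inr (Or.inr (Or.inl (sh hcd hde (Ne.symm hne) v hvT' hvT))))
      | exact Or.inr (Or.inr (Or.inr (Or.inr (sh hde hea hne v hvT hvT'))))
      | exact Or.inr (Or.inr (Or.inr (Or.inr (sh hde hea (Ne.symm hne) v hvT' hvT))))
      | exact Or.inl (sh hea hab hne v hvT hvT')
      | exact Or.inl (sh hea hab (Ne.symm hne) v hvT' hvT)
  · rintro (rfl|rfl|rfl|rfl|rfl)
    · exact ⟨triS hG hea, by simp, triS hG hab, by simp, Q5.1,
        (tri_spec hG hea).2.2, (tri_spec hG hab).2.1⟩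
    · exact ⟨triS hG hab, by simp, triS hG hbc, by simp, Q1.1,
        (tri_spec hG hab).2.2, (tri_spec hG hbc).2.1⟩
    · exact ⟨triS hG hbc, by simp, triS hG hcd, by simp, Q2.1,
        (tri_spec hG hbc).2.2, (tri_spec hG hcd).2.1⟩
    · exact ⟨triS hG hcd, by simp, triS hG hde, by simp, Q3.1,
        (tri_spec hG hcd).2.2, (tri_spec hG hde).2.1⟩
    · exact ⟨triS hG hde, by simp, triS hG hea, by simp, Q4.1,
        (tri_spec hG hde).2.2, (tri_spec hG hea).2.1⟩

lemma back_pent (hG : IsLocallyLinear G) {A B C D E : {t : Finset V // G.IsNClique 3 t}}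
    (hp : LPent (TriangleGraph G) A B C D E) :
    ∃ a b c d e : V, LPent G a b c d e ∧
      Fmap G {a,b,c,d,e} = ({A,B,C,D,E} : Set {t : Finset V // G.IsNClique 3 t}) := by
  obtain ⟨ne_AB, ne_AC, ne_AD, ne_AE, ne_BC, ne_BD, ne_BE, ne_CD, ne_CE, ne_DE⟩ := hp.ne
  obtain ⟨Q1,Q2,Q3,Q4,Q5,M1,M2,M3,M4,M5⟩ := hp
  obtain ⟨-, u1, hu1A, hu1B⟩ := Q1
  obtain ⟨-, u2, hu2B, hu2C⟩ := Q2
  obtain ⟨-, u3, hu3C, hu3D⟩ := Q3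
  obtain ⟨-, u4, hu4D, hu4E⟩ := Q4
  obtain ⟨-, u5, hu5E, hu5A⟩ := Q5
  have dAC : ∀ v, v ∈ A.1 → v ∈ C.1 → False := fun v h h' => M1 ⟨ne_AC, v, h, h'⟩
  have dBD : ∀ v, v ∈ B.1 → v ∈ D.1 → False := fun v h h' => M2 ⟨ne_BD, v, h, h'⟩
  have dCE : ∀ v, v ∈ C.1 → v ∈ E.1 → False := fun v h h' => M3 ⟨ne_CE, v, h, h'⟩
  have dDA : ∀ v, v ∈ D.1 → v ∈ A.1 → False := fun v h h' => M4 ⟨Ne.symm ne_AD, v, h, h'⟩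
  have dEB : ∀ v, v ∈ E.1 → v ∈ B.1 → False := fun v h h' => M5 ⟨Ne.symm ne_BE, v, h, h'⟩
  have ne51 : u5 ≠ u1 := by rintro rfl; exact dEB _ hu5E hu1B
  have ne52 : u5 ≠ u2 := by rintro rfl; exact dCE _ hu2C hu5E
  have ne53 : u5 ≠ u3 := by rintro rfl; exact dAC _ hu5A hu3C
  have ne54 : u5 ≠ u4 := by rintro rfl; exact dDA _ hu4D hu5A
  have ne12 : u1 ≠ u2 := by rintro rfl; exact dAC _ hu1A hu2C
  have ne13 : u1 ≠ u3 := by rintro rfl; exact dBD _ hu1B hu3D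
  have ne14 : u1 ≠ u4 := by rintro rfl; exact dDA _ hu4D hu1A
  have ne23 : u2 ≠ u3 := by rintro rfl; exact dBD _ hu2B hu3D
  have ne24 : u2 ≠ u4 := by rintro rfl; exact dCE _ hu2C hu4E
  have ne34 : u3 ≠ u4 := by rintro rfl; exact dCE _ hu3C hu4E
  have a51 : G.Adj u5 u1 := clique3_adj A.2 hu5A hu1A ne51
  have a12 : G.Adj u1 u2 := clique3_adj B.2 hu1B hu2B ne12
  have a23 : G.Adj u2 u3 := clique3_adj C.2 hu2C hu3C ne23
  have a34 : G.Adj u3 u4 := clique3_adj D.2 hu3D hu4D ne34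
  have a45 : G.Adj u4 u5 := clique3_adj E.2 hu4E hu5E (Ne.symm ne54)
  have N1 : ¬G.Adj u5 u2 :=
    skip_nonadj hG A.2 hu5A hu1A ne51 a12 (fun h => dAC _ h hu2C)
  have N2 : ¬G.Adj u1 u3 :=
    skip_nonadj hG B.2 hu1B hu2B ne12 a23 (fun h => dBD _ h hu3D)
  have N3 : ¬G.Adj u2 u4 :=
    skip_nonadj hG C.2 hu2C hu3C ne23 a34 (fun h => dCE _ h hu4E)
  have N4 : ¬G.Adj u3 u5 :=
    skip_nonadj hG D.2 hu3D hu4D ne34 a45 (fun h => dDA _ h hu5A)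
  have N5 : ¬G.Adj u4 u1 :=
    skip_nonadj hG E.2 hu4E hu5E (Ne.symm ne54) a51 (fun h => dEB _ h hu1B)
  have hpv : LPent G u5 u1 u2 u3 u4 := ⟨a51, a12, a23, a34, a45, N1, N2, N3, N4, N5⟩
  refine ⟨u5, u1, u2, u3, u4, hpv, ?_⟩
  rw [Fmap_pent hG hpv a51 a12 a23 a34 a45,
    show triS hG a51 = A from Subtype.ext (tri_unique hG a51 A.2 hu5A hu1A).symm,
    show triS hG a12 = B from Subtype.ext (tri_unique hG a12 B.2 hu1B hu2B).symm,
    show triS hG a23 = C from Subtype.ext (tri_unique hG a23 C.2 hu2C hu3C).symm,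
    show triS hG a34 = D from Subtype.ext (tri_unique hG a34 D.2 hu3D hu4D).symm,
    show triS hG a45 = E from Subtype.ext (tri_unique hG a45 E.2 hu4E hu5E).symm]

end LL

/-- A finite locally linear graph has the same number of pentagons
(induced 5-cycles) as its triangle graph. -/
theorem card_pentagons_eq [Fintype V] (G : SimpleGraph V)
    (hG : IsLocallyLinear G) :
    (inducedCycleSets G 5).ncard = (inducedCycleSets (TriangleGraph G) 5).ncard := by
  classical
  have key : ∀ s ∈ inducedCycleSets G 5,
      Fmap G s ∈ inducedCycleSets (TriangleGraph G) 5 ∧ Gmap G (Fmap G s) = s := by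
    intro s hs
    obtain ⟨a, b, c, d, e, rfl, hp⟩ := (mem_ics_iff G s).mp hs
    have h1 := hp.1
    have h2 := hp.2.1
    have h3 := hp.2.2.1
    have h4 := hp.2.2.2.1
    have h5 := hp.2.2.2.2.1
    rw [Fmap_pent hG hp h1 h2 h3 h4 h5]
    exact ⟨(mem_ics_iff (TriangleGraph G) _).mpr
        ⟨_, _, _, _, _, rfl, pent_tri hG hp h1 h2 h3 h4 h5⟩,
      Gmap_pent hG hp h1 h2 h3 h4 h5⟩
  have himg : Fmap G '' inducedCycleSets G 5 = inducedCycleSets (TriangleGraph G) 5 := by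
    apply Set.Subset.antisymm
    · rintro S ⟨s, hs, rfl⟩
      exact (key s hs).1
    · intro S hS
      obtain ⟨A, B, C, D, E, rfl, hp⟩ := (mem_ics_iff (TriangleGraph G) S).mp hS
      obtain ⟨a, b, c, d, e, hpv, hF⟩ := back_pent hG hp
      exact ⟨{a,b,c,d,e}, (mem_ics_iff G _).mpr ⟨a, b, c, d, e, rfl, hpv⟩, hF⟩
  have hinj : Set.InjOn (Fmap G) (inducedCycleSets G 5) := fun s1 h1 s2 h2 hEq => by
    rw [← (key s1 h1).2, ← (key s2 h2).2, hEq]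
  rw [← himg, Set.ncard_image_of_injOn hinj]
end

section
/- Let G be a finite simple locally linear graph on n vertices with m triangles, let A be the adjacency matrix of G, D the diagonal matrix of vertex degrees of G, and A* the adjacency matrix of the triangle graph G*. Then, as an identity of polynomials over ℚ, (x+3)^n · P_{A*}(x) = (x+3)^m · P_{A + (1/2)D}(x+3), where P_M denotes the characteristic polynomial of the matrix M. -/
open SimpleGraph Polynomial Matrix

variable {V : Type*}

section AuxCharpoly

lemma my_eval_charpoly {n : Type*} [Fintype n] [DecidableEq n] {K : Type*} [CommRing K]
    (M : Matrix n n K) (x : K) : M.charpoly.eval x = (x • (1 : Matrix n n K) - M).det := by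
  rw [Matrix.charpoly, ← Polynomial.coe_evalRingHom, RingHom.map_det]
  congr 1
  ext i j
  rcases eq_or_ne i j with rfl | h
  · simp [Matrix.charmatrix_apply_eq, Matrix.one_apply]
  · simp [Matrix.charmatrix_apply_ne _ _ _ h, Matrix.one_apply_ne h]

lemma my_rect {a b : Type*} [Fintype a] [Fintype b] [DecidableEq a] [DecidableEq b]
    (M : Matrix a b ℚ) (N : Matrix b a ℚ) :
    X ^ Fintype.card b * (M * N).charpoly = X ^ Fintype.card a * (N * M).charpoly := by
  apply Polynomial.eq_of_infinite_eval_eq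
  apply Set.Infinite.mono (s := {x : ℚ | x ≠ 0})
  · intro x hx
    have hx : (x : ℚ) ≠ 0 := hx
    simp only [Set.mem_setOf_eq, eval_mul, eval_pow, eval_X, my_eval_charpoly]
    have e1 : x • (1 : Matrix a a ℚ) - M * N = x • ((1 : Matrix a a ℚ) + (-(x⁻¹ • M)) * N) := by
      rw [smul_add, Matrix.neg_mul, Matrix.smul_mul, smul_neg, smul_smul,
        mul_inv_cancel₀ hx, one_smul, ← sub_eq_add_neg]
    have e2 : x • (1 : Matrix b b ℚ) - N * M = x • ((1 : Matrix b b ℚ) + N * (-(x⁻¹ • M))) := by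
      rw [smul_add, Matrix.mul_neg, Matrix.mul_smul, smul_neg, smul_smul,
        mul_inv_cancel₀ hx, one_smul, ← sub_eq_add_neg]
    rw [e1, e2, Matrix.det_smul, Matrix.det_smul, Matrix.det_one_add_mul_comm]
    ring
  · have : ({0}ᶜ : Set ℚ) = {x : ℚ | x ≠ 0} := by ext; simp
    rw [← this]
    exact (Set.finite_singleton 0).infinite_compl

lemma my_shift {n : Type*} [Fintype n] [DecidableEq n] (M : Matrix n n ℚ) (c : ℚ) :
    M.charpoly.comp (X + C c) = (M - c • 1).charpoly := by
  apply Polynomial.funext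
  intro x
  rw [eval_comp]
  simp only [eval_add, eval_X, eval_C, my_eval_charpoly]
  congr 1
  rw [add_smul]
  abel

end AuxCharpoly

section AuxComb
variable [Fintype V] [DecidableEq V] (G : SimpleGraph V) [DecidableRel G.Adj]

/-- vertex-triangle incidence matrix -/
def incMat : Matrix V {t : Finset V // G.IsNClique 3 t} ℚ :=
  fun v t => if v ∈ t.1 then 1 else 0

variable {G}

omit [Fintype V] [DecidableRel G.Adj] in
/-- two distinct triangles share at most one vertex -/
lemma tri_inter_s6 (hG : IsLocallyLinear G) {s t : Finset V} (hs : G.IsNClique 3 s)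
    (ht : G.IsNClique 3 t) (hst : s ≠ t) : (s ∩ t).card ≤ 1 := by
  by_contra h
  push_neg at h
  obtain ⟨u, hu, v, hv, huv⟩ := Finset.one_lt_card.mp h
  simp only [Finset.mem_inter] at hu hv
  have hadj : G.Adj u v := hs.1 hu.1 hv.1 huv
  obtain ⟨w, -, hw⟩ := hG.2 hadj
  exact hst ((hw s ⟨hs, hu.1, hv.1⟩).trans (hw t ⟨ht, hu.2, hv.2⟩).symm)

lemma key1 (hG : IsLocallyLinear G) :
    (incMat G)ᵀ * incMat G = (TriangleGraph G).adjMatrix ℚ + (3 : ℚ) • 1 := by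
  ext s t
  simp only [Matrix.mul_apply, Matrix.transpose_apply, incMat, ite_mul, one_mul, zero_mul,
    mul_ite, mul_one, mul_zero, Matrix.add_apply, SimpleGraph.adjMatrix_apply,
    Matrix.smul_apply, Matrix.one_apply, smul_eq_mul]
  have hsum : ∀ v : V, (if v ∈ t.1 then if v ∈ s.1 then (1:ℚ) else 0 else 0)
      = if v ∈ s.1 ∩ t.1 then 1 else 0 := by
    intro v
    rcases em (v ∈ s.1) with h1 | h1 <;> rcases em (v ∈ t.1) with h2 | h2 <;>
      simp [h1, h2, Finset.mem_inter]
  simp only [hsum]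
  rw [Finset.sum_ite_mem, Finset.univ_inter, Finset.sum_const, nsmul_eq_mul, mul_one]
  rcases eq_or_ne s t with rfl | hst
  · rw [Finset.inter_self, s.2.card_eq, if_neg ((TriangleGraph G).irrefl), if_pos rfl]
    norm_num
  · have hle := tri_inter_s6 hG s.2 t.2 (fun h => hst (Subtype.ext h))
    rw [if_neg hst, add_zero]
    by_cases hne : ((TriangleGraph G).Adj s t)
    · obtain ⟨-, v, hv1, hv2⟩ := hne
      have h1 : (s.1 ∩ t.1).card = 1 := le_antisymm hle
        (Finset.card_pos.mpr ⟨v, Finset.mem_inter.mpr ⟨hv1, hv2⟩⟩)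
      rw [h1, if_pos]
      · norm_num
      · exact ⟨fun h => hst h, v, hv1, hv2⟩
    · have h0 : s.1 ∩ t.1 = ∅ := by
        rw [Finset.eq_empty_iff_forall_notMem]
        intro v hv
        rw [Finset.mem_inter] at hv
        exact hne ⟨hst, v, hv.1, hv.2⟩
      rw [h0, if_neg hne]
      simp

lemma tri_count_adj (hG : IsLocallyLinear G) {u v : V} (h : G.Adj u v) :
    (Finset.univ.filter fun t : {t : Finset V // G.IsNClique 3 t} =>
      u ∈ t.1 ∧ v ∈ t.1).card = 1 := by
  obtain ⟨t0, ht0, huniq⟩ := hG.2 h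
  rw [Finset.card_eq_one]
  refine ⟨⟨t0, ht0.1⟩, ?_⟩
  ext s
  simp only [Finset.mem_filter, Finset.mem_univ, true_and, Finset.mem_singleton]
  constructor
  · rintro ⟨h1, h2⟩; exact Subtype.ext (huniq s.1 ⟨s.2, h1, h2⟩)
  · rintro rfl; exact ⟨ht0.2.1, ht0.2.2⟩

omit [DecidableRel G.Adj] in
lemma nbr_filter [DecidableRel G.Adj] {t : {t : Finset V // G.IsNClique 3 t}} {v : V}
    (hv : v ∈ t.1) : ((G.neighborFinset v).filter (· ∈ t.1)).card = 2 := by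
  have he : (G.neighborFinset v).filter (· ∈ t.1) = t.1.erase v := by
    ext w
    simp only [Finset.mem_filter, SimpleGraph.mem_neighborFinset, Finset.mem_erase]
    constructor
    · rintro ⟨ha, hw⟩; exact ⟨(G.ne_of_adj ha).symm, hw⟩
    · rintro ⟨hne, hw⟩; exact ⟨t.2.1 hv hw (Ne.symm hne), hw⟩
  rw [he, Finset.card_erase_of_mem hv, t.2.card_eq]

lemma two_mul_tri_count (hG : IsLocallyLinear G) (v : V) :
    2 * (Finset.univ.filter fun t : {t : Finset V // G.IsNClique 3 t} => v ∈ t.1).card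
      = G.degree v := by
  calc 2 * (Finset.univ.filter fun t : {t : Finset V // G.IsNClique 3 t} => v ∈ t.1).card
      = ∑ t ∈ (Finset.univ.filter fun t : {t : Finset V // G.IsNClique 3 t} => v ∈ t.1), 2 := by
        rw [Finset.sum_const, smul_eq_mul, mul_comm]
    _ = ∑ t ∈ (Finset.univ.filter fun t : {t : Finset V // G.IsNClique 3 t} => v ∈ t.1),
          ∑ w ∈ G.neighborFinset v, if w ∈ t.1 then 1 else 0 := by
        refine Finset.sum_congr rfl fun t ht => ?_
        rw [Finset.sum_boole, Nat.cast_id, nbr_filter (Finset.mem_filter.mp ht).2]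
    _ = ∑ w ∈ G.neighborFinset v,
          ∑ t ∈ (Finset.univ.filter fun t : {t : Finset V // G.IsNClique 3 t} => v ∈ t.1),
            if w ∈ t.1 then 1 else 0 := Finset.sum_comm
    _ = ∑ w ∈ G.neighborFinset v, 1 := by
        refine Finset.sum_congr rfl fun w hw => ?_
        rw [Finset.sum_filter]
        have : ∀ t : {t : Finset V // G.IsNClique 3 t},
            (if v ∈ t.1 then (if w ∈ t.1 then 1 else 0) else 0)
              = if v ∈ t.1 ∧ w ∈ t.1 then 1 else 0 := by
          intro t; by_cases h1 : v ∈ t.1 <;> simp [h1]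
        simp only [this]
        rw [Finset.sum_boole, Nat.cast_id,
          tri_count_adj hG ((G.mem_neighborFinset v w).mp hw)]
    _ = G.degree v := by rw [Finset.sum_const, smul_eq_mul, mul_one, SimpleGraph.degree]

lemma key2 (hG : IsLocallyLinear G) :
    incMat G * (incMat G)ᵀ
      = G.adjMatrix ℚ + (1/2 : ℚ) • Matrix.diagonal (fun v => (G.degree v : ℚ)) := by
  ext u v
  simp only [Matrix.mul_apply, Matrix.transpose_apply, incMat, ite_mul, one_mul, zero_mul,
    mul_ite, mul_one, mul_zero, Matrix.add_apply, SimpleGraph.adjMatrix_apply,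
    Matrix.smul_apply, smul_eq_mul]
  have hsum : ∀ t : {t : Finset V // G.IsNClique 3 t},
      (if v ∈ t.1 then if u ∈ t.1 then (1:ℚ) else 0 else 0)
        = if u ∈ t.1 ∧ v ∈ t.1 then 1 else 0 := by
    intro t; by_cases h1 : u ∈ t.1 <;> by_cases h2 : v ∈ t.1 <;> simp [h1, h2]
  simp only [hsum]
  rw [Finset.sum_boole]
  rcases eq_or_ne u v with rfl | huv
  · have h2 := two_mul_tri_count hG u
    rw [if_neg (G.irrefl), Matrix.diagonal_apply_eq, zero_add]
    have : ((Finset.univ.filter fun t : {t : Finset V // G.IsNClique 3 t} =>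
        u ∈ t.1 ∧ u ∈ t.1).card : ℚ)
        = ((Finset.univ.filter fun t : {t : Finset V // G.IsNClique 3 t} =>
        u ∈ t.1).card : ℚ) := by
      norm_cast
      congr 1
      ext t
      simp
    rw [this]
    have := congrArg (fun k : ℕ => (k : ℚ)) h2
    push_cast at this
    linarith
  · rw [Matrix.diagonal_apply_ne _ huv, mul_zero, add_zero]
    by_cases hadj : G.Adj u v
    · rw [tri_count_adj hG hadj, if_pos hadj, Nat.cast_one]
    · rw [if_neg hadj]
      have : (Finset.univ.filter fun t : {t : Finset V // G.IsNClique 3 t} =>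
          u ∈ t.1 ∧ v ∈ t.1) = ∅ := by
        rw [Finset.eq_empty_iff_forall_notMem]
        rintro t ht
        rw [Finset.mem_filter] at ht
        exact hadj (t.2.1 ht.2.1 ht.2.2 huv)
      rw [this, Finset.card_empty, Nat.cast_zero]

end AuxComb

/-- For a finite locally linear graph `G` on `n` vertices with `m` triangles,
`(x+3)^n ⬝ P_{A*}(x) = (x+3)^m ⬝ P_{A + D/2}(x+3)`. -/
theorem charpoly_triangleGraph [Fintype V] [DecidableEq V] (G : SimpleGraph V)
    [DecidableRel G.Adj] (hG : IsLocallyLinear G) :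
    (X + C 3) ^ (Fintype.card V) * ((TriangleGraph G).adjMatrix ℚ).charpoly =
      (X + C 3) ^ (Nat.card {t : Finset V // G.IsNClique 3 t}) *
        ((G.adjMatrix ℚ +
          (1/2 : ℚ) • Matrix.diagonal fun v => (G.degree v : ℚ)).charpoly.comp
            (X + C 3)) := by
  classical
  have h1 := key1 hG
  have h2 := key2 hG
  have hA : (TriangleGraph G).adjMatrix ℚ = (incMat G)ᵀ * incMat G - (3 : ℚ) • 1 := by
    rw [h1, add_sub_cancel_right]
  rw [hA, ← my_shift, ← h2, Nat.card_eq_fintype_card]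
  have hr := congrArg (fun p : Polynomial ℚ => p.comp (X + C 3)) (my_rect (incMat G) (incMat G)ᵀ)
  simp only [mul_comp, pow_comp, X_comp] at hr
  exact hr.symm
end

section
/- Let G be a finite simple locally linear graph on n vertices with m triangles that is regular of degree k, let A be the adjacency matrix of G and A* the adjacency matrix of the triangle graph G*. Then, as an identity of polynomials over ℚ, (x+3)^n · P_{A*}(x) = (x+3)^m · P_A(x + 3 − k/2), where P_M denotes the characteristic polynomial of the matrix M. -/
open SimpleGraph Polynomial Matrix

variable {V : Type*}

/-! ### Auxiliary linear algebra lemmas -/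

/-- A rectangular version of the Weinstein–Aronszajn identity for "shifted Gram" matrices. -/
lemma key_det {K : Type*} [Field K] {m n : Type*} [Fintype m] [Fintype n]
    [DecidableEq m] [DecidableEq n] (M : Matrix m n K) (p : K) (hp : p ≠ 0) :
    p ^ (Fintype.card m) * det (p • (1 : Matrix n n K) - Mᵀ * M) =
      p ^ (Fintype.card n) * det (p • (1 : Matrix m m K) - M * Mᵀ) := by
  have h1 : p • (1 : Matrix n n K) - Mᵀ * M
      = p • ((1 : Matrix n n K) + (-(p⁻¹ • Mᵀ)) * M) := by
    rw [smul_add, Matrix.neg_mul, Matrix.smul_mul, smul_neg, smul_smul,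
      mul_inv_cancel₀ hp, one_smul]
    abel
  have h2 : p • (1 : Matrix m m K) - M * Mᵀ
      = p • ((1 : Matrix m m K) + M * (-(p⁻¹ • Mᵀ))) := by
    rw [smul_add, Matrix.mul_neg, Matrix.mul_smul, smul_neg, smul_smul,
      mul_inv_cancel₀ hp, one_smul]
    abel
  rw [h1, h2, det_smul, det_smul, det_one_add_mul_comm]
  ring

/-- The characteristic polynomial of a shift of a matrix. -/
lemma charpoly_sub_smul_one {R : Type*} [CommRing R] {ι : Type*} [Fintype ι] [DecidableEq ι]
    (M : Matrix ι ι R) (c : R) :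
    (M - c • 1).charpoly = det ((X + C c) • (1 : Matrix ι ι R[X]) - M.map C) := by
  unfold Matrix.charpoly
  congr 1
  ext i j
  by_cases h : i = j
  · subst h
    simp [charmatrix_apply_eq, Matrix.sub_apply, Matrix.smul_apply, Matrix.one_apply_eq]
    ring
  · simp [charmatrix_apply_ne _ _ _ h, Matrix.sub_apply, Matrix.smul_apply,
      Matrix.one_apply_ne h]

/-- Composing the characteristic polynomial with `X + C c`. -/
lemma charpoly_comp_X_add_C {R : Type*} [CommRing R] {ι : Type*} [Fintype ι] [DecidableEq ι]
    (M : Matrix ι ι R) (c : R) :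
    M.charpoly.comp (X + C c) = det ((X + C c) • (1 : Matrix ι ι R[X]) - M.map C) := by
  have : M.charpoly.comp (X + C c) = eval₂ C (X + C c) M.charpoly := rfl
  rw [this, Matrix.charpoly, ← Polynomial.coe_eval₂RingHom, RingHom.map_det]
  congr 1
  ext i j
  by_cases h : i = j
  · subst h
    simp [charmatrix_apply_eq, Matrix.sub_apply, Matrix.smul_apply, Matrix.one_apply_eq]
  · simp [charmatrix_apply_ne _ _ _ h, Matrix.sub_apply, Matrix.smul_apply,
      Matrix.one_apply_ne h]

/-! ### The vertex-triangle incidence matrix and its Gram matrices -/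

section Comb
variable [Fintype V] [DecidableEq V] (G : SimpleGraph V) [DecidableRel G.Adj]

/-- The vertex–triangle incidence matrix. -/
def incB : Matrix V {t : Finset V // G.IsNClique 3 t} ℚ :=
  fun v t => if v ∈ t.1 then 1 else 0

variable {G}

/-- Double counting: each vertex of a locally linear `k`-regular graph
lies in exactly `k / 2` triangles. -/
lemma two_mul_card_triangles_mem (hG : IsLocallyLinear G) {k : ℕ}
    (hreg : G.IsRegularOfDegree k) (v : V) :
    2 * (Finset.univ.filter
        fun t : {t : Finset V // G.IsNClique 3 t} => v ∈ t.1).card = k := by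
  by_cases hT : Nonempty {t : Finset V // G.IsNClique 3 t}
  · set f : V → {t : Finset V // G.IsNClique 3 t} := fun w =>
      if h : G.Adj v w then ⟨(hG.2 h).exists.choose, (hG.2 h).exists.choose_spec.1⟩
      else Classical.arbitrary _ with hf
    have hfspec : ∀ {w : V} (h : G.Adj v w),
        G.IsNClique 3 (f w).1 ∧ v ∈ (f w).1 ∧ w ∈ (f w).1 := by
      intro w h
      simp only [hf, dif_pos h]
      exact (hG.2 h).exists.choose_spec
    have hmem : ∀ w ∈ G.neighborFinset v, f w ∈
        Finset.univ.filter fun t : {t : Finset V // G.IsNClique 3 t} => v ∈ t.1 := by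
      intro w hw
      rw [SimpleGraph.mem_neighborFinset] at hw
      simp [Finset.mem_filter, (hfspec hw).2.1]
    have key := Finset.card_eq_sum_card_fiberwise hmem
    have hfib : ∀ t ∈ (Finset.univ.filter
        fun t : {t : Finset V // G.IsNClique 3 t} => v ∈ t.1),
        ((G.neighborFinset v).filter fun w => f w = t).card = 2 := by
      intro t ht
      have hv : v ∈ t.1 := by simpa using ht
      have hset : ((G.neighborFinset v).filter fun w => f w = t) = t.1.erase v := by
        ext w
        simp only [Finset.mem_filter, Finset.mem_erase, SimpleGraph.mem_neighborFinset]
        constructor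
        · rintro ⟨hadj, hfw⟩
          refine ⟨(G.ne_of_adj hadj).symm, ?_⟩
          have := (hfspec hadj).2.2
          rwa [hfw] at this
        · rintro ⟨hwv, hwt⟩
          have hadj : G.Adj v w := t.2.1 (Finset.mem_coe.mpr hv) (Finset.mem_coe.mpr hwt)
            (Ne.symm hwv)
          refine ⟨hadj, ?_⟩
          have h1 := hfspec hadj
          exact Subtype.ext ((hG.2 hadj).unique ⟨h1.1, h1.2.1, h1.2.2⟩ ⟨t.2, hv, hwt⟩)
      rw [hset, Finset.card_erase_of_mem hv, t.2.2]
    rw [Finset.sum_congr rfl hfib, Finset.sum_const, smul_eq_mul] at key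
    have hdeg : (G.neighborFinset v).card = k := hreg v
    omega
  · have h0 : (Finset.univ.filter
        fun t : {t : Finset V // G.IsNClique 3 t} => v ∈ t.1) = ∅ := by
      rw [Finset.filter_eq_empty_iff]
      intro t _
      exact absurd ⟨t⟩ hT
    have hdeg : G.neighborFinset v = ∅ := by
      rw [Finset.eq_empty_iff_forall_notMem]
      intro w hw
      rw [SimpleGraph.mem_neighborFinset] at hw
      obtain ⟨t, ht, -⟩ := hG.2 hw
      exact hT ⟨⟨t, ht.1⟩⟩
    have := hreg v
    rw [SimpleGraph.degree, hdeg] at this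
    simp [h0, ← this]

lemma incB_mul_transpose (hG : IsLocallyLinear G) {k : ℕ}
    (hreg : G.IsRegularOfDegree k) :
    incB G * (incB G)ᵀ = ((k : ℚ) / 2) • 1 + G.adjMatrix ℚ := by
  classical
  ext u w
  rw [Matrix.mul_apply]
  simp only [incB, Matrix.transpose_apply, ite_mul, one_mul, zero_mul, mul_ite, mul_one,
    mul_zero, ← ite_and]
  rw [Finset.sum_boole]
  by_cases huw : u = w
  · subst huw
    simp only [and_self]
    have h2 := two_mul_card_triangles_mem hG hreg u
    have : ((Finset.univ.filter
        fun t : {t : Finset V // G.IsNClique 3 t} => u ∈ t.1).card : ℚ) = (k : ℚ) / 2 := by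
      field_simp
      exact_mod_cast (by omega : (Finset.univ.filter
        fun t : {t : Finset V // G.IsNClique 3 t} => u ∈ t.1).card * 2 = k)
    rw [this]
    simp [Matrix.add_apply, Matrix.smul_apply, Matrix.one_apply_eq]
  · by_cases hadj : G.Adj u w
    · obtain ⟨t0, ht0, huniq⟩ := hG.2 hadj
      have : (Finset.univ.filter
          fun t : {t : Finset V // G.IsNClique 3 t} => w ∈ t.1 ∧ u ∈ t.1)
          = {⟨t0, ht0.1⟩} := by
        ext t
        simp only [Finset.mem_filter, Finset.mem_univ, true_and, Finset.mem_singleton]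
        constructor
        · rintro ⟨h1, h2⟩
          exact Subtype.ext (huniq t.1 ⟨t.2, h2, h1⟩)
        · rintro rfl
          exact ⟨ht0.2.2, ht0.2.1⟩
      rw [this]
      simp [Matrix.add_apply, Matrix.smul_apply, Matrix.one_apply_ne huw, hadj]
    · have : (Finset.univ.filter
          fun t : {t : Finset V // G.IsNClique 3 t} => w ∈ t.1 ∧ u ∈ t.1) = ∅ := by
        rw [Finset.filter_eq_empty_iff]
        rintro t - ⟨h1, h2⟩
        exact hadj (t.2.1 (Finset.mem_coe.mpr h2) (Finset.mem_coe.mpr h1) huw)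
      rw [this]
      simp [Matrix.add_apply, Matrix.smul_apply, Matrix.one_apply_ne huw, hadj]

lemma transpose_mul_incB (hG : IsLocallyLinear G) :
    (incB G)ᵀ * incB G = (3 : ℚ) • 1 + (TriangleGraph G).adjMatrix ℚ := by
  classical
  ext s t
  rw [Matrix.mul_apply]
  simp only [incB, Matrix.transpose_apply, ite_mul, one_mul, zero_mul, mul_ite, mul_one,
    mul_zero, ← ite_and]
  rw [Finset.sum_boole]
  have hfilter : (Finset.univ.filter fun v : V => v ∈ t.1 ∧ v ∈ s.1) = s.1 ∩ t.1 := by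
    ext v; simp [Finset.mem_inter, and_comm]
  rw [hfilter]
  by_cases hst : s = t
  · subst hst
    rw [Finset.inter_self, s.2.2]
    simp [Matrix.add_apply, Matrix.smul_apply, Matrix.one_apply_eq, SimpleGraph.adjMatrix_apply]
  · have hcard : (s.1 ∩ t.1).card ≤ 1 := by
      rw [Finset.card_le_one]
      intro a ha b hb
      by_contra hab
      rw [Finset.mem_inter] at ha hb
      have hadj : G.Adj a b := s.2.1 (Finset.mem_coe.mpr ha.1) (Finset.mem_coe.mpr hb.1) hab
      obtain ⟨t0, -, huniq⟩ := hG.2 hadj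
      exact hst (Subtype.ext ((huniq s.1 ⟨s.2, ha.1, hb.1⟩).trans
        (huniq t.1 ⟨t.2, ha.2, hb.2⟩).symm))
    by_cases hshare : ∃ v : V, v ∈ s.1 ∧ v ∈ t.1
    · obtain ⟨v, hv1, hv2⟩ := hshare
      have h1 : (s.1 ∩ t.1).card = 1 := by
        refine le_antisymm hcard ?_
        rw [Nat.one_le_iff_ne_zero, ← Nat.pos_iff_ne_zero, Finset.card_pos]
        exact ⟨v, Finset.mem_inter.mpr ⟨hv1, hv2⟩⟩
      rw [h1]
      have : (TriangleGraph G).Adj s t := ⟨hst, v, hv1, hv2⟩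
      simp [Matrix.add_apply, Matrix.smul_apply, Matrix.one_apply_ne hst, this]
    · have h0 : s.1 ∩ t.1 = ∅ := by
        rw [Finset.eq_empty_iff_forall_notMem]
        intro v hv
        rw [Finset.mem_inter] at hv
        exact hshare ⟨v, hv.1, hv.2⟩
      have hnadj : ¬ (TriangleGraph G).Adj s t := by
        rintro ⟨-, v, hv1, hv2⟩
        exact hshare ⟨v, hv1, hv2⟩
      rw [h0]
      simp [Matrix.add_apply, Matrix.smul_apply, Matrix.one_apply_ne hst, hnadj]

end Comb

/-- The composite ring hom `ℚ → ℚ[X] → RatFunc ℚ`. -/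
noncomputable def ratPolyHom : ℚ →+* RatFunc ℚ :=
  (algebraMap ℚ[X] (RatFunc ℚ)).comp (C : ℚ →+* ℚ[X])

set_option synthInstance.maxHeartbeats 1000000 in
lemma map_shift {ι : Type*} [Fintype ι] [DecidableEq ι] (M : Matrix ι ι ℚ) :
    (((X + C 3 : ℚ[X])) • (1 : Matrix ι ι ℚ[X]) - M.map ⇑C).map ⇑(algebraMap ℚ[X] (RatFunc ℚ))
      = (algebraMap ℚ[X] (RatFunc ℚ) (X + C 3)) • (1 : Matrix ι ι (RatFunc ℚ))
        - M.map ⇑ratPolyHom := by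
  ext i j : 2
  by_cases h : i = j
  · subst h
    simp [Matrix.sub_apply, Matrix.smul_apply, Matrix.one_apply_eq, Matrix.map_apply,
      map_sub, ratPolyHom, smul_eq_mul]
  · simp [Matrix.sub_apply, Matrix.smul_apply, Matrix.one_apply_ne h, Matrix.map_apply,
      map_sub, ratPolyHom, smul_eq_mul]

/-- For a finite locally linear graph `G` on `n` vertices with `m` triangles which is
regular of degree `k`, `(x+3)^n ⬝ P_{A*}(x) = (x+3)^m ⬝ P_A(x + 3 - k/2)`. -/
theorem charpoly_triangleGraph_of_regular [Fintype V] [DecidableEq V]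
    (G : SimpleGraph V) [DecidableRel G.Adj] (k : ℕ)
    (hG : IsLocallyLinear G) (hreg : G.IsRegularOfDegree k) :
    (X + C 3) ^ (Fintype.card V) * ((TriangleGraph G).adjMatrix ℚ).charpoly =
      (X + C 3) ^ (Nat.card {t : Finset V // G.IsNClique 3 t}) *
        ((G.adjMatrix ℚ).charpoly.comp (X + C (3 - (k : ℚ) / 2))) := by
  classical
  set B := incB G with hB
  have hAs : (TriangleGraph G).adjMatrix ℚ = Bᵀ * B - (3 : ℚ) • 1 := by
    rw [transpose_mul_incB hG]; abel
  have hA : G.adjMatrix ℚ = B * Bᵀ - ((k : ℚ) / 2) • 1 := by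
    rw [incB_mul_transpose hG hreg]; abel
  rw [Nat.card_eq_fintype_card, hAs, hA, charpoly_sub_smul_one, charpoly_comp_X_add_C]
  have hmat : (X + C (3 - (k : ℚ) / 2)) •
        (1 : Matrix V V ℚ[X]) - (B * Bᵀ - ((k : ℚ) / 2) • 1).map C
      = ((X + C 3 : ℚ[X])) • (1 : Matrix V V ℚ[X]) - (B * Bᵀ).map C := by
    ext i j : 2
    by_cases h : i = j
    · subst h
      simp only [Matrix.sub_apply, Matrix.smul_apply, Matrix.one_apply_eq, Matrix.map_apply,
        smul_eq_mul, mul_one, Polynomial.C_sub]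
      ring
    · simp only [Matrix.sub_apply, Matrix.smul_apply, Matrix.one_apply_ne h, Matrix.map_apply,
        smul_eq_mul, mul_zero, Polynomial.C_sub]
      simp
  rw [hmat]
  -- Now pass to the fraction field `RatFunc ℚ`.
  apply IsFractionRing.injective ℚ[X] (RatFunc ℚ)
  have hBmul : (B * Bᵀ).map ⇑ratPolyHom = (B.map ⇑ratPolyHom) * (B.map ⇑ratPolyHom)ᵀ := by
    rw [Matrix.map_mul, Matrix.transpose_map]
  have hBmul' : (Bᵀ * B).map ⇑ratPolyHom = (B.map ⇑ratPolyHom)ᵀ * (B.map ⇑ratPolyHom) := by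
    rw [Matrix.map_mul, Matrix.transpose_map]
  rw [_root_.map_mul, _root_.map_mul, map_pow, map_pow, RingHom.map_det, RingHom.map_det,
    RingHom.mapMatrix_apply, RingHom.mapMatrix_apply, map_shift, map_shift, hBmul, hBmul']
  have hp : algebraMap ℚ[X] (RatFunc ℚ) (X + C 3) ≠ 0 := by
    intro h
    have := IsFractionRing.injective ℚ[X] (RatFunc ℚ)
      (by rw [h, map_zero] :
        algebraMap ℚ[X] (RatFunc ℚ) (X + C 3) = algebraMap ℚ[X] (RatFunc ℚ) 0)
    exact Polynomial.X_add_C_ne_zero (3 : ℚ) this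
  exact key_det (B.map ⇑ratPolyHom) (algebraMap ℚ[X] (RatFunc ℚ) (X + C 3)) hp
end

section
/- Let G be a finite simple locally linear graph with vertex set V and triangle set T, and let B be the |V| × |T| matrix over ℚ with B_{v,t} = 1 if vertex v belongs to triangle t and B_{v,t} = 0 otherwise. Then B · Bᵀ = A + (1/2)·D, where A is the adjacency matrix of G and D is the diagonal matrix of vertex degrees of G. -/
open SimpleGraph Polynomial Matrix

variable {V : Type*}

/-- For the vertex–triangle incidence matrix `B` of a finite locally linear graph `G`,
`B ⬝ Bᵀ = A + (1/2) ⬝ D`. -/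
theorem incidence_mul_transpose [Fintype V] [DecidableEq V] (G : SimpleGraph V)
    [DecidableRel G.Adj] (hG : IsLocallyLinear G)
    (B : Matrix V {t : Finset V // G.IsNClique 3 t} ℚ)
    (hB : ∀ (v : V) (t : {t : Finset V // G.IsNClique 3 t}),
      B v t = if v ∈ t.1 then 1 else 0) :
    B * Bᵀ = G.adjMatrix ℚ +
      (1/2 : ℚ) • Matrix.diagonal fun v => (G.degree v : ℚ) := by
  ext v w
  have key : (B * Bᵀ) v w =
      ((Finset.univ.filter fun t : {t : Finset V // G.IsNClique 3 t} =>
        v ∈ t.1 ∧ w ∈ t.1).card : ℚ) := by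
    rw [Matrix.mul_apply]
    simp only [Matrix.transpose_apply, hB, mul_ite, mul_one, mul_zero, ← ite_and]
    rw [Finset.sum_boole]
    congr 1
    exact congrArg Finset.card (by ext t; simp [and_comm])
  rw [key]
  simp only [Matrix.add_apply, Matrix.smul_apply, Matrix.diagonal_apply,
    SimpleGraph.adjMatrix_apply, smul_eq_mul]
  by_cases hvw : v = w
  · subst hvw
    simp only [if_pos rfl, if_neg (G.loopless.irrefl v), zero_add]
    have hcount : (Finset.univ.filter fun t : {t : Finset V // G.IsNClique 3 t} =>
        v ∈ t.1 ∧ v ∈ t.1).card * 2 = G.degree v := by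
      obtain ⟨u0, hu0⟩ := hG.1 v
      set t0 : {t : Finset V // G.IsNClique 3 t} :=
        ⟨(hG.2 hu0).exists.choose, (hG.2 hu0).exists.choose_spec.1⟩ with ht0
      classical
      set f : V → {t : Finset V // G.IsNClique 3 t} := fun u =>
        if h : G.Adj v u then ⟨(hG.2 h).exists.choose, (hG.2 h).exists.choose_spec.1⟩
        else t0 with hf
      have hmem : ∀ u ∈ G.neighborFinset v,
          f u ∈ Finset.univ.filter fun t : {t : Finset V // G.IsNClique 3 t} =>
            v ∈ t.1 ∧ v ∈ t.1 := by
        intro u hu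
        rw [SimpleGraph.mem_neighborFinset] at hu
        simp only [hf, dif_pos hu, Finset.mem_filter, Finset.mem_univ, true_and]
        exact ⟨(hG.2 hu).exists.choose_spec.2.1, (hG.2 hu).exists.choose_spec.2.1⟩
      have hcard := Finset.card_eq_sum_card_fiberwise hmem
      rw [SimpleGraph.degree, hcard, Finset.sum_congr rfl, Finset.sum_const,
        smul_eq_mul, mul_comm]
      intro t ht
      rw [Finset.mem_filter] at ht
      have hvt : v ∈ t.1 := ht.2.1
      have hfiber : (G.neighborFinset v).filter (fun u => f u = t) = t.1.erase v := by
        ext u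
        simp only [Finset.mem_filter, SimpleGraph.mem_neighborFinset, Finset.mem_erase]
        constructor
        · rintro ⟨hadj, hfu⟩
          refine ⟨hadj.ne', ?_⟩
          rw [hf] at hfu
          simp only [dif_pos hadj] at hfu
          have := (hG.2 hadj).exists.choose_spec.2.2
          rw [← Subtype.coe_inj] at hfu
          simpa [← hfu] using this
        · rintro ⟨hne, hut⟩
          have hadj : G.Adj v u := t.2.1 hvt hut (Ne.symm hne)
          refine ⟨hadj, ?_⟩
          rw [hf]
          simp only [dif_pos hadj]
          have huniq := (hG.2 hadj).unique
            (hG.2 hadj).exists.choose_spec ⟨t.2, hvt, hut⟩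
          exact Subtype.ext huniq
      rw [hfiber, Finset.card_erase_of_mem hvt, t.2.2]
    have : (G.degree v : ℚ) = ((Finset.univ.filter
        fun t : {t : Finset V // G.IsNClique 3 t} =>
          v ∈ t.1 ∧ v ∈ t.1).card : ℚ) * 2 := by
      rw [← hcount]; push_cast; ring
    rw [this]; norm_num; ring
  · rw [if_neg hvw, mul_zero, add_zero]
    by_cases hadj : G.Adj v w
    · rw [if_pos hadj]
      obtain ⟨t, ht, huniq⟩ := hG.2 hadj
      have : (Finset.univ.filter fun t : {t : Finset V // G.IsNClique 3 t} =>
          v ∈ t.1 ∧ w ∈ t.1) = {⟨t, ht.1⟩} := by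
        ext s
        simp only [Finset.mem_filter, Finset.mem_univ, true_and, Finset.mem_singleton]
        constructor
        · rintro ⟨hv, hw⟩
          exact Subtype.ext (huniq s.1 ⟨s.2, hv, hw⟩)
        · rintro rfl
          exact ⟨ht.2.1, ht.2.2⟩
      rw [this, Finset.card_singleton, Nat.cast_one]
    · rw [if_neg hadj]
      have : (Finset.univ.filter fun t : {t : Finset V // G.IsNClique 3 t} =>
          v ∈ t.1 ∧ w ∈ t.1) = ∅ := by
        rw [Finset.filter_eq_empty_iff]
        rintro s - ⟨hv, hw⟩
        exact hadj (s.2.1 hv hw hvw)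
      rw [this, Finset.card_empty, Nat.cast_zero]
end

section
/- If G is a finite simple locally linear graph and t₁, t₂, t₃ are three pairwise distinct triangles of G such that each pair among them shares a common vertex, then there is a single vertex of G belonging to all three triangles t₁, t₂, t₃. -/
open SimpleGraph Polynomial Matrix

variable {V : Type*}

/-- In a finite locally linear graph, three pairwise distinct, pairwise intersecting
triangles share a single common vertex. -/
theorem three_triangles_common_vertex [Fintype V] (G : SimpleGraph V)
    (hG : IsLocallyLinear G) (t₁ t₂ t₃ : Finset V)
    (h₁ : G.IsNClique 3 t₁) (h₂ : G.IsNClique 3 t₂) (h₃ : G.IsNClique 3 t₃)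
    (h12 : t₁ ≠ t₂) (h13 : t₁ ≠ t₃) (h23 : t₂ ≠ t₃)
    (s12 : ∃ v, v ∈ t₁ ∧ v ∈ t₂) (s13 : ∃ v, v ∈ t₁ ∧ v ∈ t₃)
    (s23 : ∃ v, v ∈ t₂ ∧ v ∈ t₃) :
    ∃! v : V, v ∈ t₁ ∧ v ∈ t₂ ∧ v ∈ t₃ := by
  classical
  -- two distinct triangles share at most one vertex
  have share : ∀ t t' : Finset V, G.IsNClique 3 t → G.IsNClique 3 t' → t ≠ t' →
      ∀ x y : V, x ∈ t → y ∈ t → x ∈ t' → y ∈ t' → x = y := by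
    intro t t' ht ht' htt' x y hxt hyt hxt' hyt'
    by_contra hxy
    have hadj : G.Adj x y := ht.1 hxt hyt hxy
    obtain ⟨u, hu, huniq⟩ := hG.2 hadj
    exact htt' ((huniq t ⟨ht, hxt, hyt⟩).trans (huniq t' ⟨ht', hxt', hyt'⟩).symm)
  obtain ⟨a, ha1, ha2⟩ := s12
  obtain ⟨b, hb1, hb3⟩ := s13
  obtain ⟨c, hc2, hc3⟩ := s23
  have huniq : ∀ v, (v ∈ t₁ ∧ v ∈ t₂ ∧ v ∈ t₃) → ∀ w, (w ∈ t₁ ∧ w ∈ t₂ ∧ w ∈ t₃) → w = v := by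
    intro v hv w hw
    exact share t₁ t₂ h₁ h₂ h12 w v hw.1 hv.1 hw.2.1 hv.2.1
  by_cases hab : a = b
  · exact ⟨a, ⟨ha1, ha2, hab ▸ hb3⟩, fun w hw => huniq a ⟨ha1, ha2, hab ▸ hb3⟩ w hw⟩
  by_cases hac : a = c
  · exact ⟨a, ⟨ha1, ha2, hac ▸ hc3⟩, fun w hw => huniq a ⟨ha1, ha2, hac ▸ hc3⟩ w hw⟩
  by_cases hbc : b = c
  · exact ⟨b, ⟨hb1, hbc ▸ hc2, hb3⟩, fun w hw => huniq b ⟨hb1, hbc ▸ hc2, hb3⟩ w hw⟩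
  -- a, b, c pairwise distinct: they form a triangle, contradiction
  exfalso
  have hadjab : G.Adj a b := h₁.1 ha1 hb1 hab
  have hadjac : G.Adj a c := h₂.1 ha2 hc2 hac
  have hadjbc : G.Adj b c := h₃.1 hb3 hc3 hbc
  have hT : G.IsNClique 3 ({a, b, c} : Finset V) :=
    SimpleGraph.is3Clique_triple_iff.mpr ⟨hadjab, hadjac, hadjbc⟩
  obtain ⟨u, hu, huniq'⟩ := hG.2 hadjab
  have hTe : ({a, b, c} : Finset V) = t₁ :=
    (huniq' _ ⟨hT, by simp, by simp⟩).trans (huniq' t₁ ⟨h₁, ha1, hb1⟩).symm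
  have hc1 : c ∈ t₁ := hTe ▸ (by simp : c ∈ ({a, b, c} : Finset V))
  exact hac (share t₁ t₂ h₁ h₂ h12 a c ha1 hc1 ha2 hc2)
end

section
/- Let G and H be finite simple locally linear graphs. If the triangle graph G* of G is isomorphic to the triangle graph H* of H, then G is isomorphic to H. That is, a locally linear graph is determined up to isomorphism by its triangle graph. -/
open SimpleGraph Polynomial Matrix

variable {V : Type*}

section Aux

variable {W : Type*} {G : SimpleGraph V} {H : SimpleGraph W}

open scoped Classical

abbrev Tri (G : SimpleGraph V) := {t : Finset V // G.IsNClique 3 t}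

lemma triangleGraph_adj {a b : Tri G} :
    (TriangleGraph G).Adj a b ↔ a ≠ b ∧ ∃ v : V, v ∈ a.1 ∧ v ∈ b.1 := Iff.rfl

/-- A vertex is *big* if it lies in at least two triangles. -/
def Big (G : SimpleGraph V) (v : V) : Prop :=
  ∃ t₁ t₂ : Tri G, t₁ ≠ t₂ ∧ v ∈ t₁.1 ∧ v ∈ t₂.1

lemma small_unique {v : V} (hv : ¬ Big G v) {t₁ t₂ : Tri G}
    (h1 : v ∈ t₁.1) (h2 : v ∈ t₂.1) : t₁ = t₂ := by
  by_contra hne; exact hv ⟨t₁, t₂, hne, h1, h2⟩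

lemma tri_eq_s13 (hG : IsLocallyLinear G) {t₁ t₂ : Tri G} {x y : V}
    (hx1 : x ∈ t₁.1) (hx2 : x ∈ t₂.1) (hy1 : y ∈ t₁.1) (hy2 : y ∈ t₂.1)
    (hxy : x ≠ y) : t₁ = t₂ := by
  have hadj : G.Adj x y := t₁.2.1 hx1 hy1 hxy
  obtain ⟨t, -, huniq⟩ := hG.2 hadj
  exact Subtype.ext ((huniq t₁.1 ⟨t₁.2, hx1, hy1⟩).trans (huniq t₂.1 ⟨t₂.2, hx2, hy2⟩).symm)

lemma exists_mem_tri (hG : IsLocallyLinear G) (v : V) : ∃ t : Tri G, v ∈ t.1 := by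
  obtain ⟨w, hw⟩ := hG.1 v
  obtain ⟨t, ⟨ht, hv, -⟩, -⟩ := hG.2 hw
  exact ⟨⟨t, ht⟩, hv⟩

lemma triple (hG : IsLocallyLinear G) {t₁ t₂ t₃ : Tri G}
    (h12 : t₁ ≠ t₂) (h13 : t₁ ≠ t₃) (h23 : t₂ ≠ t₃) {a b c : V}
    (ha1 : a ∈ t₁.1) (ha2 : a ∈ t₂.1) (hb1 : b ∈ t₁.1) (hb3 : b ∈ t₃.1)
    (hc2 : c ∈ t₂.1) (hc3 : c ∈ t₃.1) :
    ∃ v : V, v ∈ t₁.1 ∧ v ∈ t₂.1 ∧ v ∈ t₃.1 := by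
  classical
  by_cases hab : a = b
  · exact ⟨a, ha1, ha2, hab ▸ hb3⟩
  by_cases hac : a = c
  · exact ⟨a, ha1, ha2, hac ▸ hc3⟩
  by_cases hbc : b = c
  · exact ⟨b, hb1, hbc ▸ hc2, hb3⟩
  exfalso
  have hab' : G.Adj a b := t₁.2.1 ha1 hb1 hab
  have hac' : G.Adj a c := t₂.2.1 ha2 hc2 hac
  have hbc' : G.Adj b c := t₃.2.1 hb3 hc3 hbc
  have hs : G.IsNClique 3 {a, b, c} := is3Clique_triple_iff.mpr ⟨hab', hac', hbc'⟩
  obtain ⟨t, -, huniq⟩ := hG.2 hab'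
  have h1 : t₁.1 = {a, b, c} :=
    (huniq t₁.1 ⟨t₁.2, ha1, hb1⟩).trans (huniq {a, b, c} ⟨hs, by simp, by simp⟩).symm
  have hc1 : c ∈ t₁.1 := by rw [h1]; simp
  exact h12 (tri_eq_s13 hG ha1 ha2 hc1 hc2 hac)

lemma star (hG : IsLocallyLinear G) (hH : IsLocallyLinear H)
    (f : TriangleGraph G ≃g TriangleGraph H) {v : V} (hv : Big G v) :
    ∃! x : W, ∀ t : Tri G, v ∈ t.1 → x ∈ (f t).1 := by
  obtain ⟨t₁, t₂, hne, hm1, hm2⟩ := hv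
  have hfne : f t₁ ≠ f t₂ := fun h => hne (EquivLike.injective f h)
  obtain ⟨-, x, hx1, hx2⟩ :=
    triangleGraph_adj.mp (f.map_rel_iff.mpr (triangleGraph_adj.mpr ⟨hne, v, hm1, hm2⟩))
  refine ⟨x, ?_, ?_⟩
  · intro t ht
    by_cases h1 : t = t₁
    · exact h1 ▸ hx1
    by_cases h2 : t = t₂
    · exact h2 ▸ hx2
    obtain ⟨-, y, hy1, hy2⟩ :=
      triangleGraph_adj.mp (f.map_rel_iff.mpr (triangleGraph_adj.mpr ⟨h1, v, ht, hm1⟩))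
    obtain ⟨-, z, hz1, hz2⟩ :=
      triangleGraph_adj.mp (f.map_rel_iff.mpr (triangleGraph_adj.mpr ⟨h2, v, ht, hm2⟩))
    have hne1 : f t ≠ f t₁ := fun h => h1 (EquivLike.injective f h)
    have hne2 : f t ≠ f t₂ := fun h => h2 (EquivLike.injective f h)
    obtain ⟨u, hu1, hu2, hu3⟩ := triple hH hne1 hne2 hfne hy1 hy2 hz1 hz2 hx1 hx2
    by_cases hux : u = x
    · exact hux ▸ hu1
    · exact absurd (tri_eq_s13 hH hu2 hu3 hx1 hx2 hux) hfne
  · intro y hy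
    by_cases hxy : y = x
    · exact hxy
    · exact absurd (tri_eq_s13 hH (hy t₁ hm1) (hy t₂ hm2) hx1 hx2 hxy) hfne

lemma tri_nonempty (t : Tri G) : ∃ x, x ∈ t.1 :=
  Finset.card_pos.mp (by rw [t.2.2]; norm_num)

/-- Transport of a vertex through a triangle-graph isomorphism (junk value on small
vertices). -/
noncomputable def Phi (hG : IsLocallyLinear G) (hH : IsLocallyLinear H)
    (f : TriangleGraph G ≃g TriangleGraph H) (v : V) : W :=
  if hv : Big G v then (star hG hH f hv).choose
  else (tri_nonempty (f (exists_mem_tri hG v).choose)).choose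

lemma Phi_spec (hG : IsLocallyLinear G) (hH : IsLocallyLinear H)
    (f : TriangleGraph G ≃g TriangleGraph H) {v : V} (hv : Big G v) :
    ∀ t : Tri G, v ∈ t.1 → Phi hG hH f v ∈ (f t).1 := by
  rw [Phi, dif_pos hv]; exact (star hG hH f hv).choose_spec.1

lemma Phi_uniq (hG : IsLocallyLinear G) (hH : IsLocallyLinear H)
    (f : TriangleGraph G ≃g TriangleGraph H) {v : V} (hv : Big G v)
    {x : W} (hx : ∀ t : Tri G, v ∈ t.1 → x ∈ (f t).1) : x = Phi hG hH f v := by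
  rw [Phi, dif_pos hv]; exact (star hG hH f hv).choose_spec.2 x hx

lemma Phi_big (hG : IsLocallyLinear G) (hH : IsLocallyLinear H)
    (f : TriangleGraph G ≃g TriangleGraph H) {v : V} (hv : Big G v) :
    Big H (Phi hG hH f v) := by
  obtain ⟨t₁, t₂, hne, h1, h2⟩ := hv
  have hv' : Big G v := ⟨t₁, t₂, hne, h1, h2⟩
  exact ⟨f t₁, f t₂, fun h => hne (EquivLike.injective f h),
    Phi_spec hG hH f hv' t₁ h1, Phi_spec hG hH f hv' t₂ h2⟩

lemma Phi_round (hG : IsLocallyLinear G) (hH : IsLocallyLinear H)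
    (f : TriangleGraph G ≃g TriangleGraph H) {v : V} (hv : Big G v) :
    Phi hH hG f.symm (Phi hG hH f v) = v := by
  obtain ⟨t₁, t₂, hne, h1, h2⟩ := hv
  have hv' : Big G v := ⟨t₁, t₂, hne, h1, h2⟩
  have hb : Big H (Phi hG hH f v) := Phi_big hG hH f hv'
  have u1 := Phi_spec hH hG f.symm hb (f t₁) (Phi_spec hG hH f hv' t₁ h1)
  have u2 := Phi_spec hH hG f.symm hb (f t₂) (Phi_spec hG hH f hv' t₂ h2)
  rw [f.symm_apply_apply] at u1 u2
  by_contra hne2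
  exact hne (tri_eq_s13 hG u1 u2 h1 h2 hne2)

lemma Phi_mem_rev (hG : IsLocallyLinear G) (hH : IsLocallyLinear H)
    (f : TriangleGraph G ≃g TriangleGraph H) {v : V} (hv : Big G v)
    (t : Tri G) (h : Phi hG hH f v ∈ (f t).1) : v ∈ t.1 := by
  have hb : Big H (Phi hG hH f v) := Phi_big hG hH f hv
  have := Phi_spec hH hG f.symm hb (f t) h
  rwa [Phi_round hG hH f hv, f.symm_apply_apply] at this

/-- The big vertices of a triangle. -/
noncomputable def BigF (G : SimpleGraph V) (t : Tri G) : Finset V :=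
  t.1.filter (Big G)

lemma mem_BigF {t : Tri G} {v : V} : v ∈ BigF G t ↔ v ∈ t.1 ∧ Big G v := by
  rw [BigF, Finset.mem_filter]

/-- The small vertices of a triangle. -/
noncomputable def SmallF (G : SimpleGraph V) (t : Tri G) : Finset V := t.1 \ BigF G t

lemma mem_SmallF {t : Tri G} {v : V} : v ∈ SmallF G t ↔ v ∈ t.1 ∧ ¬ Big G v := by
  rw [SmallF, Finset.mem_sdiff, mem_BigF]; tauto

lemma bigF_card_le (hG : IsLocallyLinear G) (hH : IsLocallyLinear H)
    (f : TriangleGraph G ≃g TriangleGraph H) (t : Tri G) :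
    (BigF G t).card ≤ (BigF H (f t)).card := by
  refine Finset.card_le_card_of_injOn (Phi hG hH f) ?_ ?_
  · intro v hv
    obtain ⟨hvt, hb⟩ := mem_BigF.mp hv
    exact mem_BigF.mpr ⟨Phi_spec hG hH f hb t hvt, Phi_big hG hH f hb⟩
  · intro v₁ h₁ v₂ h₂ he
    have b₁ := (mem_BigF.mp (by exact_mod_cast h₁)).2
    have b₂ := (mem_BigF.mp (by exact_mod_cast h₂)).2
    rw [← Phi_round hG hH f b₁, ← Phi_round hG hH f b₂, he]

lemma bigF_card_eq (hG : IsLocallyLinear G) (hH : IsLocallyLinear H)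
    (f : TriangleGraph G ≃g TriangleGraph H) (t : Tri G) :
    (BigF G t).card = (BigF H (f t)).card := by
  refine le_antisymm (bigF_card_le hG hH f t) ?_
  have := bigF_card_le hH hG f.symm (f t)
  rwa [f.symm_apply_apply] at this

lemma smallF_card_eq (hG : IsLocallyLinear G) (hH : IsLocallyLinear H)
    (f : TriangleGraph G ≃g TriangleGraph H) (t : Tri G) :
    (SmallF G t).card = (SmallF H (f t)).card := by
  have h1 : (SmallF G t).card = 3 - (BigF G t).card := by
    rw [SmallF,
      Finset.card_sdiff_of_subset (show BigF G t ⊆ t.1 from Finset.filter_subset _ _), t.2.2]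
  have h2 : (SmallF H (f t)).card = 3 - (BigF H (f t)).card := by
    rw [SmallF,
      Finset.card_sdiff_of_subset (show BigF H (f t) ⊆ (f t).1 from Finset.filter_subset _ _), (f t).2.2]
  rw [h1, h2, bigF_card_eq hG hH f t]

noncomputable def smallEquiv (hG : IsLocallyLinear G) (hH : IsLocallyLinear H)
    (f : TriangleGraph G ≃g TriangleGraph H) (t : Tri G) :
    {x // x ∈ SmallF G t} ≃ {x // x ∈ SmallF H (f t)} :=
  Finset.equivOfCardEq (smallF_card_eq hG hH f t)

/-- The vertex map induced by a triangle-graph isomorphism. -/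
noncomputable def phi (hG : IsLocallyLinear G) (hH : IsLocallyLinear H)
    (f : TriangleGraph G ≃g TriangleGraph H) (v : V) : W :=
  if hv : Big G v then Phi hG hH f v
  else (smallEquiv hG hH f (exists_mem_tri hG v).choose
      ⟨v, mem_SmallF.mpr ⟨(exists_mem_tri hG v).choose_spec, hv⟩⟩).1

lemma phi_small_eq (hG : IsLocallyLinear G) (hH : IsLocallyLinear H)
    (f : TriangleGraph G ≃g TriangleGraph H) {v : V} (hv : ¬ Big G v)
    {t : Tri G} (ht : v ∈ t.1) :
    phi hG hH f v = (smallEquiv hG hH f t ⟨v, mem_SmallF.mpr ⟨ht, hv⟩⟩).1 := by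
  obtain rfl : t = (exists_mem_tri hG v).choose :=
    small_unique hv ht (exists_mem_tri hG v).choose_spec
  rw [phi, dif_neg hv]

lemma phi_mem_small (hG : IsLocallyLinear G) (hH : IsLocallyLinear H)
    (f : TriangleGraph G ≃g TriangleGraph H) {v : V} (hv : ¬ Big G v)
    {t : Tri G} (ht : v ∈ t.1) : phi hG hH f v ∈ SmallF H (f t) := by
  rw [phi_small_eq hG hH f hv ht]
  exact (smallEquiv hG hH f t _).2

lemma phi_mem_iff (hG : IsLocallyLinear G) (hH : IsLocallyLinear H)
    (f : TriangleGraph G ≃g TriangleGraph H) (v : V) (t : Tri G) :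
    v ∈ t.1 ↔ phi hG hH f v ∈ (f t).1 := by
  by_cases hv : Big G v
  · have hphi : phi hG hH f v = Phi hG hH f v := by rw [phi, dif_pos hv]
    rw [hphi]
    exact ⟨Phi_spec hG hH f hv t, Phi_mem_rev hG hH f hv t⟩
  · constructor
    · intro ht
      exact (mem_SmallF.mp (phi_mem_small hG hH f hv ht)).1
    · intro hft
      obtain ⟨t₀, ht₀⟩ := exists_mem_tri hG v
      have hsm := mem_SmallF.mp (phi_mem_small hG hH f hv ht₀)
      have hft' : f t = f t₀ := small_unique hsm.2 hft hsm.1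
      have : t = t₀ := EquivLike.injective f hft'
      exact this ▸ ht₀

lemma phi_inj (hG : IsLocallyLinear G) (hH : IsLocallyLinear H)
    (f : TriangleGraph G ≃g TriangleGraph H) :
    Function.Injective (phi hG hH f) := by
  intro v₁ v₂ he
  by_cases b₁ : Big G v₁ <;> by_cases b₂ : Big G v₂
  · rw [show phi hG hH f v₁ = Phi hG hH f v₁ from by rw [phi, dif_pos b₁],
      show phi hG hH f v₂ = Phi hG hH f v₂ from by rw [phi, dif_pos b₂]] at he
    rw [← Phi_round hG hH f b₁, ← Phi_round hG hH f b₂, he]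
  · obtain ⟨t₀, ht₀⟩ := exists_mem_tri hG v₂
    have hs := mem_SmallF.mp (phi_mem_small hG hH f b₂ ht₀)
    have hbigphi : Big H (phi hG hH f v₁) := by
      rw [phi, dif_pos b₁]; exact Phi_big hG hH f b₁
    exact absurd (he ▸ hbigphi) hs.2
  · obtain ⟨t₀, ht₀⟩ := exists_mem_tri hG v₁
    have hs := mem_SmallF.mp (phi_mem_small hG hH f b₁ ht₀)
    have hbigphi : Big H (phi hG hH f v₂) := by
      rw [phi, dif_pos b₂]; exact Phi_big hG hH f b₂
    exact absurd (he ▸ hbigphi) hs.2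
  · obtain ⟨t, ht⟩ := exists_mem_tri hG v₁
    have h2t : v₂ ∈ t.1 :=
      (phi_mem_iff hG hH f v₂ t).mpr (he ▸ (phi_mem_iff hG hH f v₁ t).mp ht)
    have e1 := phi_small_eq hG hH f b₁ ht
    have e2 := phi_small_eq hG hH f b₂ h2t
    rw [e1, e2] at he
    exact congrArg Subtype.val ((smallEquiv hG hH f t).injective (Subtype.ext he))

lemma phi_surj (hG : IsLocallyLinear G) (hH : IsLocallyLinear H)
    (f : TriangleGraph G ≃g TriangleGraph H) :
    Function.Surjective (phi hG hH f) := by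
  intro x
  by_cases hx : Big H x
  · refine ⟨Phi hH hG f.symm x, ?_⟩
    have hb : Big G (Phi hH hG f.symm x) := Phi_big hH hG f.symm hx
    rw [phi, dif_pos hb]
    exact Phi_round hH hG f.symm hx
  · obtain ⟨s, hs⟩ := exists_mem_tri hH x
    have hfs : x ∈ (f (f.symm s)).1 := by rw [f.apply_symm_apply]; exact hs
    obtain ⟨a, ha⟩ := (smallEquiv hG hH f (f.symm s)).surjective
      ⟨x, mem_SmallF.mpr ⟨hfs, hx⟩⟩
    have hav := mem_SmallF.mp a.2
    refine ⟨a.1, ?_⟩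
    rw [phi_small_eq hG hH f hav.2 hav.1,
      show (⟨a.1, mem_SmallF.mpr ⟨hav.1, hav.2⟩⟩ : {y // y ∈ SmallF G (f.symm s)}) = a from
        Subtype.ext rfl, ha]

lemma adj_iff_tri (hL : IsLocallyLinear G) {x y : V} :
    G.Adj x y ↔ x ≠ y ∧ ∃ t : Tri G, x ∈ t.1 ∧ y ∈ t.1 := by
  constructor
  · intro h
    refine ⟨h.ne, ?_⟩
    obtain ⟨t, ⟨ht, h1, h2⟩, -⟩ := hL.2 h
    exact ⟨⟨t, ht⟩, h1, h2⟩
  · rintro ⟨hne, t, h1, h2⟩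
    exact t.2.1 h1 h2 hne

end Aux

/-- A finite locally linear graph is determined up to isomorphism by its triangle
graph: if the triangle graphs of `G` and `H` are isomorphic then so are `G` and `H`. -/
theorem locallyLinear_determined_by_triangleGraph {W : Type*} [Fintype V] [Fintype W]
    (G : SimpleGraph V) (H : SimpleGraph W)
    (hG : IsLocallyLinear G) (hH : IsLocallyLinear H)
    (h : Nonempty (TriangleGraph G ≃g TriangleGraph H)) :
    Nonempty (G ≃g H) := by
  obtain ⟨f⟩ := h
  refine ⟨⟨Equiv.ofBijective (phi hG hH f) ⟨phi_inj hG hH f, phi_surj hG hH f⟩, ?_⟩⟩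
  intro a b
  show H.Adj (phi hG hH f a) (phi hG hH f b) ↔ G.Adj a b
  rw [adj_iff_tri hH, adj_iff_tri hG]
  constructor
  · rintro ⟨hne, s, h1, h2⟩
    have h1' : phi hG hH f a ∈ (f (f.symm s)).1 := by rwa [f.apply_symm_apply]
    have h2' : phi hG hH f b ∈ (f (f.symm s)).1 := by rwa [f.apply_symm_apply]
    exact ⟨fun hab => hne (hab ▸ rfl), f.symm s,
      (phi_mem_iff hG hH f a _).mpr h1', (phi_mem_iff hG hH f b _).mpr h2'⟩
  · rintro ⟨hne, t, h1, h2⟩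
    exact ⟨fun hab => hne (phi_inj hG hH f hab), f t,
      (phi_mem_iff hG hH f a t).mp h1, (phi_mem_iff hG hH f b t).mp h2⟩
end

section
/- For every finite simple graph H that contains no induced subgraph isomorphic to the diamond K₄ − e and no induced subgraph isomorphic to K_{1,4}, there exists a finite simple locally linear graph G whose triangle graph G* is isomorphic to H. -/
open SimpleGraph Polynomial Matrix

variable {V : Type*}

section Helpers

open Finset

variable {W : Type*} [Fintype W] [DecidableEq W] (H : SimpleGraph W) [DecidableRel H.Adj]

/-- The maximal clique containing the edge `wx` (in a diamond-free graph). -/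
def eClique (w x : W) : Finset W :=
  insert w (insert x (H.neighborFinset w ∩ H.neighborFinset x))

variable {H}

/-- Abbreviation for the diamond-free condition in combinatorial form. -/
def NoDiamond (H : SimpleGraph W) : Prop :=
  ∀ ⦃a b c d : W⦄, H.Adj c d → H.Adj a c → H.Adj a d → H.Adj b c → H.Adj b d →
    a ≠ b → H.Adj a b

/-- Combinatorial form of `K_{1,4}`-freeness. -/
def NoStar (H : SimpleGraph W) : Prop :=
  ∀ (w : W) (x : Fin 4 → W), (∀ i, H.Adj w (x i)) →
    (∀ i j, i ≠ j → ¬ H.Adj (x i) (x j)) → Function.Injective x → False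

lemma mem_eClique {w x v : W} (h : H.Adj w x) :
    v ∈ eClique H w x ↔ (v = w ∨ H.Adj w v) ∧ (v = x ∨ H.Adj x v) := by
  simp only [eClique, mem_insert, mem_inter, mem_neighborFinset]
  constructor
  · rintro (rfl | rfl | ⟨h1, h2⟩)
    · exact ⟨Or.inl rfl, Or.inr h.symm⟩
    · exact ⟨Or.inr h, Or.inl rfl⟩
    · exact ⟨Or.inr h1, Or.inr h2⟩
  · rintro ⟨(rfl | h1), (rfl | h2)⟩
    · exact Or.inl rfl
    · exact Or.inl rfl
    · exact Or.inr (Or.inl rfl)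
    · exact Or.inr (Or.inr ⟨h1, h2⟩)

lemma left_mem_eClique {w x : W} (h : H.Adj w x) : w ∈ eClique H w x :=
  (mem_eClique h).2 ⟨Or.inl rfl, Or.inr h.symm⟩

lemma right_mem_eClique {w x : W} (h : H.Adj w x) : x ∈ eClique H w x :=
  (mem_eClique h).2 ⟨Or.inr h, Or.inl rfl⟩

lemma eClique_isClique (hD : NoDiamond H) {w x : W} (h : H.Adj w x) :
    ∀ ⦃c d : W⦄, c ∈ eClique H w x → d ∈ eClique H w x → c ≠ d → H.Adj c d := by
  intro c d hc hd hne
  rw [mem_eClique h] at hc hd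
  obtain ⟨hc1, hc2⟩ := hc
  obtain ⟨hd1, hd2⟩ := hd
  rcases hc1 with rfl | hc1
  · rcases hd1 with rfl | hd1
    · exact absurd rfl hne
    · exact hd1
  · rcases hd1 with rfl | hd1
    · exact hc1.symm
    · rcases hc2 with rfl | hc2
      · rcases hd2 with rfl | hd2
        · exact absurd rfl hne
        · exact hd2
      · rcases hd2 with rfl | hd2
        · exact hc2.symm
        · exact hD h hc1.symm hc2.symm hd1.symm hd2.symm hne

lemma eClique_eq (hD : NoDiamond H) {w x y z : W} (hwx : H.Adj w x) (hyz : H.Adj y z)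
    (hy : y ∈ eClique H w x) (hz : z ∈ eClique H w x) :
    eClique H y z = eClique H w x := by
  have key : ∀ v ∈ eClique H w x, v ∈ eClique H y z := by
    intro v hv
    rw [mem_eClique hyz]
    constructor
    · by_cases h : v = y
      · exact Or.inl h
      · exact Or.inr (eClique_isClique hD hwx hy hv (Ne.symm h))
    · by_cases h : v = z
      · exact Or.inl h
      · exact Or.inr (eClique_isClique hD hwx hz hv (Ne.symm h))
  have hw := key w (left_mem_eClique hwx)
  have hx := key x (right_mem_eClique hwx)
  apply Finset.ext
  intro v
  constructor
  · intro hv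
    rw [mem_eClique hwx]
    constructor
    · by_cases h : v = w
      · exact Or.inl h
      · exact Or.inr (eClique_isClique hD hyz hw hv (Ne.symm h))
    · by_cases h : v = x
      · exact Or.inl h
      · exact Or.inr (eClique_isClique hD hyz hx hv (Ne.symm h))
  · exact key v

lemma eClique_symm (hD : NoDiamond H) {w x : W} (h : H.Adj w x) :
    eClique H x w = eClique H w x :=
  eClique_eq hD h h.symm (right_mem_eClique h) (left_mem_eClique h)

variable (H) in
/-- The set of edge-cliques containing a vertex. -/
def cliquesAt (w : W) : Finset (Finset W) := (H.neighborFinset w).image (eClique H w)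

lemma mem_cliquesAt {C : Finset W} {w : W} :
    C ∈ cliquesAt H w ↔ ∃ x, H.Adj w x ∧ eClique H w x = C := by
  simp [cliquesAt, Finset.mem_image]

lemma self_mem_of_cliquesAt {C : Finset W} {w : W} (hC : C ∈ cliquesAt H w) : w ∈ C := by
  obtain ⟨x, hx, rfl⟩ := mem_cliquesAt.1 hC
  exact left_mem_eClique hx

lemma cliquesAt_isClique (hD : NoDiamond H) {C : Finset W} {w : W} (hC : C ∈ cliquesAt H w) :
    ∀ ⦃c d : W⦄, c ∈ C → d ∈ C → c ≠ d → H.Adj c d := by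
  obtain ⟨x, hx, rfl⟩ := mem_cliquesAt.1 hC
  exact eClique_isClique hD hx

lemma cliquesAt_edge (hD : NoDiamond H) {C : Finset W} {w w' : W} (hC : C ∈ cliquesAt H w)
    (hC' : C ∈ cliquesAt H w') (hne : w ≠ w') : H.Adj w w' ∧ C = eClique H w w' := by
  have hw := self_mem_of_cliquesAt hC
  have hw' := self_mem_of_cliquesAt hC'
  have hadj : H.Adj w w' := cliquesAt_isClique hD hC hw hw' hne
  obtain ⟨x, hx, rfl⟩ := mem_cliquesAt.1 hC
  exact ⟨hadj, (eClique_eq hD hx hadj hw hw').symm⟩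

lemma cliques_unique (hD : NoDiamond H) {C D : Finset W} {w w' : W} (hCD : C ≠ D)
    (hCw : C ∈ cliquesAt H w) (hCw' : C ∈ cliquesAt H w')
    (hDw : D ∈ cliquesAt H w) (hDw' : D ∈ cliquesAt H w') : w = w' := by
  by_contra hne
  exact hCD ((cliquesAt_edge hD hCw hCw' hne).2.trans
    (cliquesAt_edge hD hDw hDw' hne).2.symm)

lemma cliquesAt_card (hD : NoDiamond H) (hK : NoStar H) (w : W) :
    (cliquesAt H w).card ≤ 3 := by
  by_contra hlt
  push_neg at hlt
  obtain ⟨s, hs, hscard⟩ := Finset.exists_subset_card_eq hlt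
  have e : Fin 4 ≃ {C // C ∈ s} := (Fintype.equivFinOfCardEq (by simp [hscard])).symm
  have hmem : ∀ i : Fin 4, (e i).1 ∈ cliquesAt H w := fun i => hs (e i).2
  choose x hx hxe using fun i => mem_cliquesAt.1 (hmem i)
  have hCinj : Function.Injective fun i => (e i).1 := fun i j hij =>
    e.injective (Subtype.ext hij)
  have hxinj : Function.Injective x := by
    intro i j hij
    apply hCinj
    simp only []
    rw [← hxe i, ← hxe j, hij]
  apply hK w x hx _ hxinj
  intro i j hij hadj
  apply hij
  apply hCinj
  have hmemj : x j ∈ eClique H w (x i) :=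
    (mem_eClique (hx i)).2 ⟨Or.inr (hx j), Or.inr hadj⟩
  have hmemw : w ∈ eClique H w (x i) := left_mem_eClique (hx i)
  have : eClique H w (x j) = eClique H w (x i) :=
    eClique_eq hD (hx i) (hx j) hmemw hmemj
  simp only []
  rw [← hxe i, ← hxe j, this]

end Helpers

section Construction

open Finset

variable {W : Type*} [Fintype W] [DecidableEq W] (H : SimpleGraph W) [DecidableRel H.Adj]

/-- Validity predicate for slot vertices. -/
def SlotValid : Finset W ⊕ W × Fin 3 → Prop
  | .inl C => ∃ w, C ∈ cliquesAt H w
  | .inr p => (p.2 : ℕ) < 3 - (cliquesAt H p.1).card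

/-- The vertex type of the locally linear graph. -/
abbrev Slots := {x : Finset W ⊕ W × Fin 3 // SlotValid H x}

/-- Membership of a slot in the triangle of a vertex `w` of `H`. -/
def SlotMem (v : Slots H) (w : W) : Prop :=
  match v.1 with
  | .inl C => C ∈ cliquesAt H w
  | .inr p => p.1 = w

/-- The slots coming from cliques at `w`. -/
def twL (w : W) : Finset (Slots H) :=
  (cliquesAt H w).attach.map
    ⟨fun C => ⟨.inl C.1, ⟨w, C.2⟩⟩, by
      intro a b hab
      apply Subtype.ext
      exact Sum.inl_injective (congrArg Subtype.val hab)⟩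

/-- The private filler slots of `w`. -/
def twR (w : W) : Finset (Slots H) :=
  (Finset.range (3 - (cliquesAt H w).card)).attach.map
    ⟨fun i => ⟨.inr (w, ⟨i.1, by have := Finset.mem_range.1 i.2; omega⟩),
        by simpa [SlotValid] using Finset.mem_range.1 i.2⟩, by
      intro a b hab
      apply Subtype.ext
      exact Fin.mk.inj (Prod.mk.inj (Sum.inr_injective (congrArg Subtype.val hab))).2⟩

/-- The triangle of `w`. -/
def tw (w : W) : Finset (Slots H) := twL H w ∪ twR H w

/-- The locally linear graph: edges are exactly those inside some triangle `tw w`. -/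
def slotGraph : SimpleGraph (Slots H) where
  Adj a b := a ≠ b ∧ ∃ w, a ∈ tw H w ∧ b ∈ tw H w
  symm := ⟨fun _ _ ⟨h, w, h1, h2⟩ => ⟨h.symm, w, h2, h1⟩⟩
  loopless := ⟨fun _ ⟨h, _⟩ => h rfl⟩

variable {H}

lemma mem_tw {v : Slots H} {w : W} : v ∈ tw H w ↔ SlotMem H v w := by
  obtain ⟨x, hx⟩ := v
  cases x with
  | inl C =>
    simp only [tw, twL, twR, Finset.mem_union, Finset.mem_map, Finset.mem_attach,
      true_and, Function.Embedding.coeFn_mk, SlotMem]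
    constructor
    · rintro (⟨D, hD⟩ | ⟨i, hi⟩)
      · obtain rfl : C = D.1 := Sum.inl_injective (congrArg Subtype.val hD).symm
        exact D.2
      · simp [Subtype.ext_iff] at hi
    · intro hC
      exact Or.inl ⟨⟨C, hC⟩, rfl⟩
  | inr p =>
    simp only [tw, twL, twR, Finset.mem_union, Finset.mem_map, Finset.mem_attach,
      true_and, Function.Embedding.coeFn_mk, SlotMem]
    constructor
    · rintro (⟨D, hD⟩ | ⟨i, hi⟩)
      · simp [Subtype.ext_iff] at hD
      · have : Sum.inr (α := Finset W) (w, (⟨i.1, by have := Finset.mem_range.1 i.2; omega⟩ : Fin 3)) = Sum.inr p := by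
          exact congrArg Subtype.val hi
        obtain ⟨h1, -⟩ := Prod.mk.injEq .. ▸ (Sum.inr.injEq .. ▸ this)
        exact h1.symm
    · rintro rfl
      have hx' : (p.2 : ℕ) < 3 - (cliquesAt H p.1).card := hx
      refine Or.inr ⟨⟨(p.2 : ℕ), Finset.mem_range.2 hx'⟩, ?_⟩
      apply Subtype.ext
      rfl

lemma card_tw (hD : NoDiamond H) (hK : NoStar H) (w : W) : (tw H w).card = 3 := by
  have hdisj : Disjoint (twL H w) (twR H w) := by
    rw [Finset.disjoint_left]
    rintro a haL haR
    simp only [twL, twR, Finset.mem_map, Finset.mem_attach, true_and,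
      Function.Embedding.coeFn_mk] at haL haR
    obtain ⟨C, rfl⟩ := haL
    obtain ⟨i, hi⟩ := haR
    simp [Subtype.ext_iff] at hi
  rw [tw, Finset.card_union_of_disjoint hdisj]
  simp only [twL, twR, Finset.card_map, Finset.card_attach, Finset.card_range]
  have := cliquesAt_card hD hK w
  omega

lemma shared_slot {v : Slots H} {w w' : W} (h1 : v ∈ tw H w)
    (h2 : v ∈ tw H w') (hne : w ≠ w') :
    ∃ C, v.1 = Sum.inl C ∧ C ∈ cliquesAt H w ∧ C ∈ cliquesAt H w' := by
  rw [mem_tw] at h1 h2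
  obtain ⟨x, hx⟩ := v
  cases x with
  | inl C => exact ⟨C, rfl, h1, h2⟩
  | inr p =>
    exact absurd ((h1 : p.1 = w).symm.trans (h2 : p.1 = w') : w = w') hne

lemma label_unique (hD : NoDiamond H) {a b : Slots H} {w w' : W} (hab : a ≠ b)
    (h1 : a ∈ tw H w) (h2 : b ∈ tw H w) (h3 : a ∈ tw H w') (h4 : b ∈ tw H w') :
    w = w' := by
  by_contra hne
  obtain ⟨C, hCa, hCw, hCw'⟩ := shared_slot h1 h3 hne
  obtain ⟨D, hDb, hDw, hDw'⟩ := shared_slot h2 h4 hne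
  have hCD : C ≠ D := by
    rintro rfl
    exact hab (Subtype.ext (hCa.trans hDb.symm))
  exact hne (cliques_unique hD hCD hCw hCw' hDw hDw')

lemma tw_isNClique (hD : NoDiamond H) (hK : NoStar H) (w : W) :
    (slotGraph H).IsNClique 3 (tw H w) := by
  rw [isNClique_iff]
  refine ⟨?_, card_tw hD hK w⟩
  intro a ha b hb hne
  exact ⟨hne, w, ha, hb⟩

lemma nclique_eq_tw (hD : NoDiamond H) (hK : NoStar H) {t : Finset (Slots H)}
    (ht : (slotGraph H).IsNClique 3 t) : ∃ w, t = tw H w := by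
  have hcard := ht.2
  obtain ⟨a, b, c, hab, hac, hbc, rfl⟩ := Finset.card_eq_three.1 ht.2
  have hclique := ht.1
  have key : ∀ w : W, a ∈ tw H w → b ∈ tw H w → c ∈ tw H w → ∃ w', {a, b, c} = tw H w' := by
    intro w ha hb hc
    refine ⟨w, Finset.eq_of_subset_of_card_le ?_ ?_⟩
    · intro v hv
      simp only [Finset.mem_insert, Finset.mem_singleton] at hv
      rcases hv with rfl | rfl | rfl <;> assumption
    · rw [card_tw hD hK w, hcard]
  obtain ⟨-, w1, ha1, hb1⟩ : (slotGraph H).Adj a b :=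
    hclique (by simp) (by simp) hab
  obtain ⟨-, w2, hb2, hc2⟩ : (slotGraph H).Adj b c :=
    hclique (by simp) (by simp) hbc
  obtain ⟨-, w3, ha3, hc3⟩ : (slotGraph H).Adj a c :=
    hclique (by simp) (by simp) hac
  by_cases h12 : w1 = w2
  · exact key w1 ha1 hb1 (h12 ▸ hc2)
  by_cases h13 : w1 = w3
  · exact key w1 ha1 hb1 (h13 ▸ hc3)
  by_cases h23 : w2 = w3
  · exact key w2 (h23 ▸ ha3) hb2 hc2
  -- all distinct: derive a contradiction
  exfalso
  obtain ⟨C, hCb, hC1, hC2⟩ := shared_slot hb1 hb2 h12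
  obtain ⟨C', hCa, hC'1, hC'3⟩ := shared_slot ha1 ha3 h13
  obtain ⟨C'', hCc, hC''2, hC''3⟩ := shared_slot hc2 hc3 h23
  obtain ⟨hadj12, hCeq⟩ := cliquesAt_edge hD hC1 hC2 h12
  obtain ⟨hadj13, hC'eq⟩ := cliquesAt_edge hD hC'1 hC'3 h13
  obtain ⟨hadj23, hC''eq⟩ := cliquesAt_edge hD hC''2 hC''3 h23
  have hw3mem : w3 ∈ eClique H w1 w2 :=
    (mem_eClique hadj12).2 ⟨Or.inr hadj13, Or.inr hadj23⟩
  have hw1mem : w1 ∈ eClique H w1 w2 := left_mem_eClique hadj12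
  have heq : eClique H w1 w3 = eClique H w1 w2 :=
    eClique_eq hD hadj12 hadj13 hw1mem hw3mem
  apply hab
  apply Subtype.ext
  rw [hCa, hCb, hC'eq, hCeq, heq]

lemma tw_inj (hD : NoDiamond H) (hK : NoStar H) {w w' : W} (h : tw H w = tw H w') :
    w = w' := by
  have h1 : 1 < (tw H w).card := by rw [card_tw hD hK w]; omega
  obtain ⟨a, ha, b, hb, hab⟩ := Finset.one_lt_card.1 h1
  exact label_unique hD hab ha hb (h ▸ ha) (h ▸ hb)

lemma slotGraph_locallyLinear (hD : NoDiamond H) (hK : NoStar H) :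
    IsLocallyLinear (slotGraph H) := by
  constructor
  · intro v
    have hv : ∃ w, v ∈ tw H w := by
      obtain ⟨x, hx⟩ := v
      cases x with
      | inl C =>
        obtain ⟨w, hw⟩ := hx
        exact ⟨w, mem_tw.2 hw⟩
      | inr p => exact ⟨p.1, mem_tw.2 rfl⟩
    obtain ⟨w, hw⟩ := hv
    have h1 : 1 < (tw H w).card := by rw [card_tw hD hK w]; omega
    obtain ⟨a, ha, b, hb, hab⟩ := Finset.one_lt_card.1 h1
    by_cases hva : v = a
    · exact ⟨b, (hva ▸ hab : v ≠ b), w, hw, hb⟩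
    · exact ⟨a, hva, w, hw, ha⟩
  · rintro x y ⟨hne, w, hx, hy⟩
    refine ⟨tw H w, ⟨tw_isNClique hD hK w, hx, hy⟩, ?_⟩
    rintro t ⟨ht, hxt, hyt⟩
    obtain ⟨w', rfl⟩ := nclique_eq_tw hD hK ht
    rw [label_unique hD hne hxt hyt hx hy]

noncomputable def isoHslot (hD : NoDiamond H) (hK : NoStar H) :
    H ≃g TriangleGraph (slotGraph H) := by
  have hbij : Function.Bijective
      (fun w => (⟨tw H w, tw_isNClique hD hK w⟩ :
        {t : Finset (Slots H) // (slotGraph H).IsNClique 3 t})) := by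
    constructor
    · intro w w' h
      exact tw_inj hD hK (by simpa [Subtype.ext_iff] using h)
    · rintro ⟨t, ht⟩
      obtain ⟨w, rfl⟩ := nclique_eq_tw hD hK ht
      exact ⟨w, rfl⟩
  refine ⟨Equiv.ofBijective _ hbij, ?_⟩
  intro w w'
  show (_ ≠ _ ∧ ∃ v, v ∈ tw H w ∧ v ∈ tw H w') ↔ H.Adj w w'
  constructor
  · rintro ⟨hne, v, hvw, hvw'⟩
    have hww' : w ≠ w' := by
      rintro rfl
      exact hne rfl
    obtain ⟨C, hC, hCw, hCw'⟩ := shared_slot hvw hvw' hww'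
    exact cliquesAt_isClique hD hCw (self_mem_of_cliquesAt hCw)
      (self_mem_of_cliquesAt hCw') hww'
  · intro hadj
    refine ⟨?_, ⟨Sum.inl (eClique H w w'), ⟨w, mem_cliquesAt.2 ⟨w', hadj, rfl⟩⟩⟩,
      mem_tw.2 ?_, mem_tw.2 ?_⟩
    · intro h
      exact hadj.ne (tw_inj hD hK (by simpa [Subtype.ext_iff] using h))
    · exact mem_cliquesAt.2 ⟨w', hadj, rfl⟩
    · exact mem_cliquesAt.2 ⟨w, hadj.symm, eClique_symm hD hadj⟩

end Construction

section Transfer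

variable {A B : Type*} {GA : SimpleGraph A} {GB : SimpleGraph B}

/-- Transport a finset of vertices along a graph isomorphism. -/
def mapT (φ : GA ≃g GB) (t : Finset A) : Finset B := t.map φ.toEquiv.toEmbedding

lemma mem_mapT {φ : GA ≃g GB} {t : Finset A} {b : B} :
    b ∈ mapT φ t ↔ φ.symm b ∈ t := Finset.mem_map_equiv

lemma mapT_mapT (φ : GA ≃g GB) (t : Finset A) : mapT φ.symm (mapT φ t) = t := by
  ext a
  rw [mem_mapT, mem_mapT]
  rw [show (φ.symm.symm : A → B) = φ from rfl]
  rw [RelIso.symm_apply_apply]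

lemma mapT_mapT' (φ : GA ≃g GB) (t : Finset B) : mapT φ (mapT φ.symm t) = t := by
  ext a
  rw [mem_mapT, mem_mapT]
  rw [show (φ.symm.symm : A → B) = φ from rfl, RelIso.apply_symm_apply]

lemma mem_mapT_self {φ : GA ≃g GB} {t : Finset A} {a : A} (h : a ∈ t) :
    φ a ∈ mapT φ t := by
  rw [mem_mapT, RelIso.symm_apply_apply]
  exact h

lemma isNClique_mapT (φ : GA ≃g GB) {t : Finset A} {n : ℕ} (ht : GA.IsNClique n t) :
    GB.IsNClique n (mapT φ t) := by
  rw [isNClique_iff] at ht ⊢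
  refine ⟨?_, by rw [mapT, Finset.card_map]; exact ht.2⟩
  intro x hx y hy hne
  rw [Finset.mem_coe, mem_mapT] at hx hy
  have hne' : φ.symm x ≠ φ.symm y := fun h => hne (φ.symm.injective h)
  have hadj : GA.Adj (φ.symm x) (φ.symm y) := ht.1 hx hy hne'
  have := φ.map_adj_iff.2 hadj
  rwa [RelIso.apply_symm_apply, RelIso.apply_symm_apply] at this

lemma isLocallyLinear_map (φ : GA ≃g GB) (h : IsLocallyLinear GA) :
    IsLocallyLinear GB := by
  constructor
  · intro v
    obtain ⟨w, hw⟩ := h.1 (φ.symm v)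
    refine ⟨φ w, ?_⟩
    have := φ.map_adj_iff.2 hw
    rwa [RelIso.apply_symm_apply] at this
  · intro x y hxy
    have hxy' : GA.Adj (φ.symm x) (φ.symm y) := φ.symm.map_adj_iff.2 hxy
    obtain ⟨t, ⟨ht, hxt, hyt⟩, huniq⟩ := h.2 hxy'
    refine ⟨mapT φ t, ⟨isNClique_mapT φ ht, ?_, ?_⟩, ?_⟩
    · rw [mem_mapT]; exact hxt
    · rw [mem_mapT]; exact hyt
    · rintro t' ⟨ht', hxt', hyt'⟩
      have : mapT φ.symm t' = t := by
        apply huniq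
        exact ⟨isNClique_mapT φ.symm ht',
          by rw [mem_mapT, show (φ.symm.symm : A → B) = φ from rfl,
            RelIso.apply_symm_apply]; exact hxt',
          by rw [mem_mapT, show (φ.symm.symm : A → B) = φ from rfl,
            RelIso.apply_symm_apply]; exact hyt'⟩
      rw [← this, mapT_mapT']

/-- A graph isomorphism induces an isomorphism of triangle graphs. -/
def triangleGraphIso (φ : GA ≃g GB) : TriangleGraph GA ≃g TriangleGraph GB where
  toFun t := ⟨mapT φ t.1, isNClique_mapT φ t.2⟩
  invFun t := ⟨mapT φ.symm t.1, isNClique_mapT φ.symm t.2⟩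
  left_inv t := Subtype.ext (mapT_mapT φ t.1)
  right_inv t := Subtype.ext (mapT_mapT' φ t.1)
  map_rel_iff' := by
    intro a b
    show (_ ≠ _ ∧ ∃ v, _) ↔ (a ≠ b ∧ ∃ v, _)
    constructor
    · rintro ⟨hne, v, hv1, hv2⟩
      refine ⟨fun h => hne (by rw [h]), φ.symm v, ?_, ?_⟩
      · rwa [← mem_mapT]
      · rwa [← mem_mapT]
    · rintro ⟨hne, v, hv1, hv2⟩
      refine ⟨?_, φ v, mem_mapT_self hv1, mem_mapT_self hv2⟩
      intro h
      apply hne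
      have : mapT φ a.1 = mapT φ b.1 := congrArg Subtype.val h
      apply Subtype.ext
      rw [← mapT_mapT φ a.1, ← mapT_mapT φ b.1, this]

end Transfer

/-- Every finite graph with no induced diamond `K₄ - e` and no induced `K_{1,4}` is the
triangle graph of some finite locally linear graph. -/
theorem exists_locallyLinear_triangleGraph {W : Type*} [Fintype W] (H : SimpleGraph W)
    (hDiamond : IsEmpty (diamondGraph ↪g H))
    (hStar : IsEmpty (completeBipartiteGraph (Fin 1) (Fin 4) ↪g H)) :
    ∃ (n : ℕ) (G : SimpleGraph (Fin n)),
      IsLocallyLinear G ∧ Nonempty (TriangleGraph G ≃g H) := by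
  classical
  -- derive the combinatorial diamond-free condition
  have hD : NoDiamond H := by
    intro a b c d hcd hac had hbc hbd hab
    by_contra hnadj
    apply hDiamond.false
    refine ⟨⟨![a, b, c, d], ?_⟩, ?_⟩
    · intro i j hij
      fin_cases i <;> fin_cases j <;>
        simp_all [hab, hac.ne, had.ne, hbc.ne, hbd.ne, hcd.ne]
    · intro i j
      change H.Adj (![a, b, c, d] i) (![a, b, c, d] j) ↔ _
      fin_cases i <;> fin_cases j <;>
        simp [diamondGraph, hab, hac, had, hbc, hbd, hcd, hac.symm, had.symm,
          hbc.symm, hbd.symm, hcd.symm, hnadj] <;>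
        exact fun h => hnadj h.symm
  have hK : NoStar H := by
    intro w x hadj hnadj hinj
    apply hStar.false
    refine ⟨⟨Sum.elim (fun _ => w) x, ?_⟩, ?_⟩
    · intro i j hij
      match i, j with
      | Sum.inl i, Sum.inl j => simp [Subsingleton.elim i j]
      | Sum.inl i, Sum.inr j => exact absurd hij.symm (hadj j).ne'
      | Sum.inr i, Sum.inl j => exact absurd hij (hadj i).ne'
      | Sum.inr i, Sum.inr j => exact congrArg Sum.inr (hinj hij)
    · intro i j
      change H.Adj (Sum.elim (fun _ => w) x i) (Sum.elim (fun _ => w) x j) ↔ _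
      match i, j with
      | Sum.inl i, Sum.inl j => simp [Subsingleton.elim i j]
      | Sum.inl i, Sum.inr j => simp [hadj j]
      | Sum.inr i, Sum.inl j => simp [(hadj i).symm]
      | Sum.inr i, Sum.inr j =>
          by_cases h : i = j
          · subst h; simp
          · simp [hnadj i j h, h]
  letI : DecidableRel H.Adj := Classical.decRel _
  letI : DecidableEq W := Classical.decEq W
  letI : DecidablePred (SlotValid H) := Classical.decPred _
  letI : Fintype (Slots H) := Subtype.fintype _
  set n := Fintype.card (Slots H) with hn
  let e : Slots H ≃ Fin n := Fintype.equivFin _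
  let G : SimpleGraph (Fin n) := (slotGraph H).comap e.symm.toEmbedding
  let φ : slotGraph H ≃g G := (SimpleGraph.Iso.comap e.symm (slotGraph H)).symm
  refine ⟨n, G, isLocallyLinear_map φ (slotGraph_locallyLinear hD hK), ?_⟩
  exact ⟨((triangleGraphIso φ).symm).trans (isoHslot hD hK).symm⟩
end

section
/- A finite simple graph G with no isolated vertices satisfies the property that for every vertex v the subgraph induced on the neighborhood of v is 1-regular if and only if every edge of G belongs to exactly one triangle of G. -/
open SimpleGraph Polynomial Matrix

variable {V : Type*}

lemma deg_one_iff {G : SimpleGraph V} [Fintype V] [DecidableRel G.Adj] (v : V) :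
    G.degree v = 1 ↔ ∃! w, G.Adj v w := by
  classical
  rw [SimpleGraph.degree, Finset.card_eq_one]
  constructor
  · rintro ⟨a, ha⟩
    refine ⟨a, ?_, fun w hw => ?_⟩
    · have : a ∈ G.neighborFinset v := ha ▸ Finset.mem_singleton_self a
      exact (mem_neighborFinset ..).1 this
    · have : w ∈ ({a} : Finset V) := ha ▸ (mem_neighborFinset ..).2 hw
      exact Finset.mem_singleton.1 this
  · rintro ⟨a, ha, hu⟩
    refine ⟨a, Finset.eq_singleton_iff_unique_mem.2 ⟨(mem_neighborFinset ..).2 ha,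
      fun w hw => hu w ((mem_neighborFinset ..).1 hw)⟩⟩

lemma third_vertex [DecidableEq V] {G : SimpleGraph V} {t : Finset V} {x y : V}
    (ht : G.IsNClique 3 t) (hx : x ∈ t) (hy : y ∈ t) (hxy : x ≠ y) :
    ∃ z, z ≠ x ∧ z ≠ y ∧ G.Adj x z ∧ G.Adj y z ∧ t = {x, y, z} := by
  have hcard : t.card = 3 := ht.2
  have hsub : ({x, y} : Finset V) ⊆ t := by
    intro a ha; simp at ha; rcases ha with rfl | rfl <;> assumption
  have h2 : ({x, y} : Finset V).card = 2 := by rw [Finset.card_insert_of_notMem (by simp [hxy]), Finset.card_singleton]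
  have hd : (t \ {x, y}).card = 1 := by rw [Finset.card_sdiff_of_subset hsub, hcard, h2]
  obtain ⟨z, hz⟩ := Finset.card_eq_one.1 hd
  have hzm : z ∈ t \ ({x, y} : Finset V) := hz ▸ Finset.mem_singleton_self z
  rw [Finset.mem_sdiff, Finset.mem_insert, Finset.mem_singleton] at hzm
  obtain ⟨hzt, hzxy⟩ := hzm
  push_neg at hzxy
  have heq : t = {x, y, z} := by
    apply Finset.eq_of_subset_of_card_le _ (le_of_eq _) |>.symm
    · intro a ha; simp at ha; rcases ha with rfl | rfl | rfl <;> assumption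
    · rw [hcard]
      rw [Finset.card_insert_of_notMem (by simp [hxy, Ne.symm hzxy.1]),
        Finset.card_insert_of_notMem (by simp [Ne.symm hzxy.2]), Finset.card_singleton]
  exact ⟨z, hzxy.1, hzxy.2, ht.1 hx hzt hzxy.1.symm, ht.1 hy hzt hzxy.2.symm, heq⟩

/-- For a finite graph with no isolated vertices, every neighborhood induces a
1-regular graph iff every edge lies in exactly one triangle. -/
theorem locallyLinear_iff [Fintype V] (G : SimpleGraph V) [DecidableRel G.Adj]
    (hiso : ∀ v : V, ∃ w : V, G.Adj v w) :
    (∀ v : V, (G.induce (G.neighborSet v)).IsRegularOfDegree 1) ↔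
      (∀ ⦃x y : V⦄, G.Adj x y → ∃! t : Finset V, G.IsNClique 3 t ∧ x ∈ t ∧ y ∈ t) := by
  classical
  constructor
  · intro h x y hxy
    obtain ⟨⟨z, hz⟩, haz, huniq⟩ := (deg_one_iff (G := G.induce (G.neighborSet x))
      (⟨y, hxy⟩ : G.neighborSet x)).1 (h x ⟨y, hxy⟩)
    have hxz : G.Adj x z := hz
    have hyz : G.Adj y z := haz
    refine ⟨{x, y, z}, ⟨is3Clique_triple_iff.2 ⟨hxy, hxz, hyz⟩, by simp, by simp⟩, ?_⟩
    rintro t' ⟨ht', hxt', hyt'⟩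
    obtain ⟨z', _, _, hxz', hyz', rfl⟩ := third_vertex ht' hxt' hyt' hxy.ne
    have := huniq ⟨z', hxz'⟩ hyz'
    have : z' = z := congrArg Subtype.val this
    rw [this]
  · intro h v u
    rw [deg_one_iff]
    have hvu : G.Adj v ↑u := u.2
    obtain ⟨t, ⟨ht, hvt, hut⟩, huniq⟩ := h hvu
    obtain ⟨z, hzv, hzu, hvz, huz, rfl⟩ := third_vertex ht hvt hut hvu.ne
    refine ⟨⟨z, hvz⟩, huz, ?_⟩
    rintro ⟨w, hvw⟩ huw
    have huw' : G.Adj (↑u) w := huw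
    have hclique : G.IsNClique 3 {v, ↑u, w} := is3Clique_triple_iff.2 ⟨hvu, hvw, huw'⟩
    have heq := huniq {v, ↑u, w} ⟨hclique, by simp, by simp⟩
    have hwmem : w ∈ ({v, ↑u, z} : Finset V) := heq ▸ (by simp : w ∈ ({v, ↑u, w} : Finset V))
    simp only [Finset.mem_insert, Finset.mem_singleton] at hwmem
    rcases hwmem with rfl | rfl | rfl
    · exact absurd rfl hvw.ne'
    · exact absurd rfl huw'.ne'
    · rfl
end

section
/- Let G be a finite simple locally linear graph. If q = (v₁, v₂, v₃, v₄) is an induced 4-cycle in G, then each of the four edges of q lies in a distinct triangle of G, and these four triangles, in cyclic order, form an induced 4-cycle in the triangle graph G*: consecutive triangles share a vertex of q, while opposite triangles share no vertex. -/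
open SimpleGraph Polynomial Matrix

variable {V : Type*}

private lemma clique3_adj_s17 {G : SimpleGraph V} {t : Finset V} (h : G.IsNClique 3 t)
    {a b : V} (ha : a ∈ t) (hb : b ∈ t) (hab : a ≠ b) : G.Adj a b :=
  h.1 ha hb hab

private lemma opp_disjoint {G : SimpleGraph V} (hG : IsLocallyLinear G)
    {v₁ v₂ v₃ v₄ : V}
    (d12 : v₁ ≠ v₂) (d13 : v₁ ≠ v₃) (d14 : v₁ ≠ v₄)
    (d23 : v₂ ≠ v₃) (d24 : v₂ ≠ v₄)
    (a23 : G.Adj v₂ v₃)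
    (n13 : ¬ G.Adj v₁ v₃) (n24 : ¬ G.Adj v₂ v₄)
    {t₁ t₃ : Finset V} (ht₁ : G.IsNClique 3 t₁) (ht₃ : G.IsNClique 3 t₃)
    (h11 : v₁ ∈ t₁) (h12 : v₂ ∈ t₁) (h33 : v₃ ∈ t₃) (h34 : v₄ ∈ t₃)
    {v : V} (hv1 : v ∈ t₁) (hv3 : v ∈ t₃) : False := by
  classical
  by_cases e1 : v = v₁
  · subst e1; exact n13 (clique3_adj_s17 ht₃ hv3 h33 d13)
  by_cases e2 : v = v₂
  · subst e2; exact n24 (clique3_adj_s17 ht₃ hv3 h34 d24)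
  have av1 : G.Adj v v₁ := clique3_adj_s17 ht₁ hv1 h11 e1
  have av2 : G.Adj v v₂ := clique3_adj_s17 ht₁ hv1 h12 e2
  by_cases e3 : v = v₃
  · subst e3; exact n13 av1.symm
  by_cases e4 : v = v₄
  · subst e4; exact n24 av2.symm
  have av3 : G.Adj v v₃ := clique3_adj_s17 ht₃ hv3 h33 e3
  have hs : G.IsNClique 3 ({v₂, v₃, v} : Finset V) := by
    constructor
    · intro a ha b hb hab
      simp only [Finset.coe_insert, Set.mem_insert_iff, Finset.coe_singleton,
        Set.mem_singleton_iff] at ha hb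
      rcases ha with rfl | rfl | rfl <;> rcases hb with rfl | rfl | rfl <;>
        first
          | exact absurd rfl hab
          | exact a23 | exact a23.symm
          | exact av2.symm | exact av2
          | exact av3.symm | exact av3
    · rw [Finset.card_insert_of_notMem (by simp [d23, Ne.symm e2]),
        Finset.card_insert_of_notMem (by simp [Ne.symm e3]), Finset.card_singleton]
  obtain ⟨u, -, hu⟩ := hG.2 av2.symm
  have h1u : t₁ = u := hu t₁ ⟨ht₁, h12, hv1⟩
  have hsu : ({v₂, v₃, v} : Finset V) = u := hu _ ⟨hs, by simp, by simp⟩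
  have hv1s : v₁ ∈ ({v₂, v₃, v} : Finset V) := by rw [hsu, ← h1u]; exact h11
  simp only [Finset.mem_insert, Finset.mem_singleton] at hv1s
  rcases hv1s with rfl | rfl | rfl
  · exact d12 rfl
  · exact d13 rfl
  · exact e1 rfl

/-- The four edges of an induced 4-cycle of a finite locally linear graph lie in four
pairwise distinct triangles which form an induced 4-cycle in the triangle graph:
consecutive triangles share a vertex of the quadrilateral, while opposite triangles
share no vertex. -/
theorem quadrilateral_to_triangleGraph [Fintype V] (G : SimpleGraph V)
    (hG : IsLocallyLinear G) (v₁ v₂ v₃ v₄ : V)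
    (d12 : v₁ ≠ v₂) (d13 : v₁ ≠ v₃) (d14 : v₁ ≠ v₄)
    (d23 : v₂ ≠ v₃) (d24 : v₂ ≠ v₄) (d34 : v₃ ≠ v₄)
    (a12 : G.Adj v₁ v₂) (a23 : G.Adj v₂ v₃) (a34 : G.Adj v₃ v₄) (a41 : G.Adj v₄ v₁)
    (n13 : ¬ G.Adj v₁ v₃) (n24 : ¬ G.Adj v₂ v₄) :
    ∃ t₁ t₂ t₃ t₄ : {t : Finset V // G.IsNClique 3 t},
      (v₁ ∈ t₁.1 ∧ v₂ ∈ t₁.1) ∧ (v₂ ∈ t₂.1 ∧ v₃ ∈ t₂.1) ∧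
      (v₃ ∈ t₃.1 ∧ v₄ ∈ t₃.1) ∧ (v₄ ∈ t₄.1 ∧ v₁ ∈ t₄.1) ∧
      t₁ ≠ t₂ ∧ t₁ ≠ t₃ ∧ t₁ ≠ t₄ ∧ t₂ ≠ t₃ ∧ t₂ ≠ t₄ ∧ t₃ ≠ t₄ ∧
      (TriangleGraph G).Adj t₁ t₂ ∧ (TriangleGraph G).Adj t₂ t₃ ∧
      (TriangleGraph G).Adj t₃ t₄ ∧ (TriangleGraph G).Adj t₄ t₁ ∧
      (∀ v : V, ¬ (v ∈ t₁.1 ∧ v ∈ t₃.1)) ∧ (∀ v : V, ¬ (v ∈ t₂.1 ∧ v ∈ t₄.1)) := by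

  obtain ⟨t₁, ⟨ht₁, m11, m12⟩, -⟩ := hG.2 a12
  obtain ⟨t₂, ⟨ht₂, m22, m23⟩, -⟩ := hG.2 a23
  obtain ⟨t₃, ⟨ht₃, m33, m34⟩, -⟩ := hG.2 a34
  obtain ⟨t₄, ⟨ht₄, m44, m41⟩, -⟩ := hG.2 a41
  have odd13 : ∀ v : V, ¬ (v ∈ t₁ ∧ v ∈ t₃) := fun v ⟨hv1, hv3⟩ =>
    opp_disjoint hG d12 d13 d14 d23 d24 a23 n13 n24 ht₁ ht₃ m11 m12 m33 m34 hv1 hv3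
  have odd24 : ∀ v : V, ¬ (v ∈ t₂ ∧ v ∈ t₄) := fun v ⟨hv2, hv4⟩ =>
    opp_disjoint hG d23 d24 (Ne.symm d12) d34 (Ne.symm d13) a34 n24
      (fun h => n13 h.symm) ht₂ ht₄ m22 m23 m44 m41 hv2 hv4
  have ne12 : t₁ ≠ t₂ := fun h => n13 (clique3_adj_s17 ht₁ m11 (h ▸ m23) d13)
  have ne13 : t₁ ≠ t₃ := fun h => odd13 v₃ ⟨h ▸ m33, m33⟩
  have ne14 : t₁ ≠ t₄ := fun h => n24 (clique3_adj_s17 ht₁ m12 (h ▸ m44) d24)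
  have ne23 : t₂ ≠ t₃ := fun h => n24 (clique3_adj_s17 ht₂ m22 (h ▸ m34) d24)
  have ne24 : t₂ ≠ t₄ := fun h => odd24 v₄ ⟨h ▸ m44, m44⟩
  have ne34 : t₃ ≠ t₄ := fun h => n13 (clique3_adj_s17 ht₃ m33 (h ▸ m41) (Ne.symm d13)).symm
  exact ⟨⟨t₁, ht₁⟩, ⟨t₂, ht₂⟩, ⟨t₃, ht₃⟩, ⟨t₄, ht₄⟩,
    ⟨m11, m12⟩, ⟨m22, m23⟩, ⟨m33, m34⟩, ⟨m44, m41⟩,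
    fun h => ne12 (congrArg Subtype.val h), fun h => ne13 (congrArg Subtype.val h),
    fun h => ne14 (congrArg Subtype.val h), fun h => ne23 (congrArg Subtype.val h),
    fun h => ne24 (congrArg Subtype.val h), fun h => ne34 (congrArg Subtype.val h),
    ⟨fun h => ne12 (congrArg Subtype.val h), v₂, m12, m22⟩,
    ⟨fun h => ne23 (congrArg Subtype.val h), v₃, m23, m33⟩,
    ⟨fun h => ne34 (congrArg Subtype.val h), v₄, m34, m44⟩,
    ⟨fun h => ne14 (congrArg Subtype.val h.symm), v₁, m41, m11⟩,
    odd13, odd24⟩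
end
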